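/- Let π be drawn uniformly at random from all (2^n)! permutations of {0,1}^n. Then Pr[ E_π(1/2) ≥ (n/4)·(1 - 5·n^{-1/4}) ] tends to 1 as n → ∞. -/

import Mathlib

open scoped Classical

/-- Bit strings of length `n`. -/
abbrev BitStr (n : ℕ) := Fin n → Bool

/-- Hamming weight of a bit string. -/
def hamW {n : ℕ} (z : BitStr n) : ℕ := (Finset.univ.filter fun i => z i = true).card

/-- The adiabatic Hamiltonian `H_π(s)` for the scrambled Hamming-weight cost function:
diagonal entry `(1-s)·n/2 + s·W(π⁻¹ z)`, entry `-(1-s)/2` between strings differing in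
exactly one bit, and `0` otherwise. -/
noncomputable def Hpi (n : ℕ) (π : Equiv.Perm (BitStr n)) (s : ℝ) :
    Matrix (BitStr n) (BitStr n) ℝ :=
  Matrix.of fun z z' =>
    if z = z' then (1 - s) * n / 2 + s * hamW (π.symm z)
    else if (Finset.univ.filter fun i => z i ≠ z' i).card = 1 then -(1 - s) / 2
    else 0

/-- The eigenvalues of a (Hermitian) real symmetric matrix, sorted in nondecreasing
order and counted with multiplicity. Junk value `[]` if the matrix is not Hermitian. -/
noncomputable def sortedEigs {ι : Type*} [Fintype ι] [DecidableEq ι]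
    (A : Matrix ι ι ℝ) : List ℝ :=
  if h : A.IsHermitian then Multiset.sort (Finset.univ.val.map h.eigenvalues) (· ≤ ·)
  else []

/-- `E_π(s)`: the smallest eigenvalue of `H_π(s)`. -/
noncomputable def Epi (n : ℕ) (π : Equiv.Perm (BitStr n)) (s : ℝ) : ℝ :=
  (sortedEigs (Hpi n π s)).getD 0 0

/-- `E_{1,π}(s)`: the second-smallest eigenvalue of `H_π(s)`, counted with multiplicity. -/
noncomputable def E1pi (n : ℕ) (π : Equiv.Perm (BitStr n)) (s : ℝ) : ℝ :=
  (sortedEigs (Hpi n π s)).getD 1 0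

/-- The spectral gap `γ_π(s)`. -/
noncomputable def gapPi (n : ℕ) (π : Equiv.Perm (BitStr n)) (s : ℝ) : ℝ :=
  E1pi n π s - Epi n π s

/-- Probability of an event under a uniformly random permutation of `{0,1}^n`. -/
noncomputable def prPerm (n : ℕ) (P : Equiv.Perm (BitStr n) → Prop) : ℝ :=
  (Finset.univ.filter P).card / (Fintype.card (Equiv.Perm (BitStr n)))

/-- The asymptotic ground state energy density `e(s)`. -/
noncomputable def eFun (s : ℝ) : ℝ := if s ≤ 1/2 then s / 2 else (1 - s) / 2

namespace Stmt14

open Finset Matrix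

variable {n : ℕ}

/-! ### flips -/

def bflip (z : BitStr n) (i : Fin n) : BitStr n := Function.update z i (!(z i))

lemma bflip_apply_self (z : BitStr n) (i : Fin n) : bflip z i i = !(z i) := by
  simp [bflip]

lemma bflip_apply_ne (z : BitStr n) {i j : Fin n} (h : j ≠ i) : bflip z i j = z j := by
  simp [bflip, Function.update_of_ne h]

lemma bflip_ne (z : BitStr n) (i : Fin n) : bflip z i ≠ z := by
  intro h
  have := congrFun h i
  rw [bflip_apply_self] at this
  exact (Bool.not_ne_self (z i)) this

lemma bflip_bflip (z : BitStr n) (i : Fin n) : bflip (bflip z i) i = z := by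
  funext j
  by_cases h : j = i
  · subst h; rw [bflip_apply_self, bflip_apply_self, Bool.not_not]
  · rw [bflip_apply_ne _ h, bflip_apply_ne _ h]

lemma filter_bflip (z : BitStr n) (i : Fin n) :
    (Finset.univ.filter fun j => z j ≠ (bflip z i) j) = {i} := by
  ext j
  simp only [mem_filter, mem_univ, true_and, mem_singleton]
  constructor
  · intro h
    by_contra hj
    exact h (bflip_apply_ne z hj).symm
  · intro h; subst h
    rw [bflip_apply_self]
    exact fun h => (Bool.not_ne_self (z j)) h.symm

lemma card_filter_bflip (z : BitStr n) (i : Fin n) :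
    (Finset.univ.filter fun j => z j ≠ (bflip z i) j).card = 1 := by
  rw [filter_bflip]; simp

lemma eq_bflip_of_card_one {z z' : BitStr n}
    (h : (Finset.univ.filter fun j => z j ≠ z' j).card = 1) : ∃ i, z' = bflip z i := by
  obtain ⟨i, hi⟩ := Finset.card_eq_one.mp h
  refine ⟨i, funext fun j => ?_⟩
  by_cases hj : j = i
  · subst hj
    have : j ∈ (Finset.univ.filter fun j => z j ≠ z' j) := by rw [hi]; simp
    simp only [mem_filter, mem_univ, true_and] at this
    rw [bflip_apply_self]
    revert this; cases z j <;> cases z' j <;> decide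
  · have : j ∉ (Finset.univ.filter fun j => z j ≠ z' j) := by rw [hi]; simp [hj]
    simp only [mem_filter, mem_univ, true_and, not_not] at this
    rw [bflip_apply_ne _ hj, this]

lemma bflip_inj (z : BitStr n) : Function.Injective (bflip z) := by
  intro i j h
  by_contra hij
  have h1 := congrFun h i
  rw [bflip_apply_self, bflip_apply_ne z hij] at h1
  exact (Bool.not_ne_self (z i)) h1

/-! ### Matrix entries of `Hpi n π (1/2)` -/

lemma hpi_apply (π : Equiv.Perm (BitStr n)) (z z' : BitStr n) :
    Hpi n π (1/2) z z' =
      (if z' = z then (n : ℝ)/4 + (hamW (π.symm z) : ℝ)/2 else 0)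
      + ∑ i : Fin n, (if z' = bflip z i then -(1/4 : ℝ) else 0) := by
  by_cases h : z = z'
  · subst h
    have hz : ∀ i : Fin n, ¬ (z = bflip z i) := fun i hz => (bflip_ne z i) hz.symm
    simp only [Hpi, Matrix.of_apply, if_pos rfl]
    rw [Finset.sum_eq_zero (fun i _ => by rw [if_neg (hz i)])]
    push_cast
    ring
  · have h' : ¬ (z' = z) := fun e => h e.symm
    simp only [Hpi, Matrix.of_apply, if_neg h, if_neg h']
    by_cases hc : (Finset.univ.filter fun i => z i ≠ z' i).card = 1
    · rw [if_pos hc]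
      obtain ⟨i₀, hi₀⟩ := eq_bflip_of_card_one hc
      have : ∀ i : Fin n, (z' = bflip z i) ↔ (i = i₀) := by
        intro i
        constructor
        · intro hi
          apply bflip_inj z
          rw [← hi, ← hi₀]
        · intro hi; subst hi; exact hi₀
      rw [Finset.sum_congr rfl (fun i _ => by rw [if_congr (this i) rfl rfl])]
      rw [Finset.sum_ite_eq' Finset.univ i₀ (fun _ => -(1/4 : ℝ))]
      simp; norm_num
    · rw [if_neg hc, zero_add]
      refine (Finset.sum_eq_zero fun i _ => ?_).symm
      rw [if_neg]
      intro hi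
      rw [hi] at hc
      exact hc (card_filter_bflip z i)

lemma hpi_mulVec (π : Equiv.Perm (BitStr n)) (v : BitStr n → ℝ) (z : BitStr n) :
    (Hpi n π (1/2) *ᵥ v) z
      = ((n : ℝ)/4 + (hamW (π.symm z) : ℝ)/2) * v z
        - (1/4) * ∑ i : Fin n, v (bflip z i) := by
  show (∑ z' : BitStr n, Hpi n π (1/2) z z' * v z') = _
  have key : ∀ z' : BitStr n, Hpi n π (1/2) z z' * v z'
      = (if z' = z then ((n : ℝ)/4 + (hamW (π.symm z) : ℝ)/2) * v z' else 0)
        + ∑ i : Fin n, (if z' = bflip z i then -(1/4 : ℝ) * v z' else 0) := by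
    intro z'
    rw [hpi_apply, add_mul, Finset.sum_mul]
    congr 1
    · split <;> simp
    · exact Finset.sum_congr rfl fun i _ => by split <;> simp
  have h1 : (∑ z' : BitStr n, if z' = z then ((n : ℝ)/4 + (hamW (π.symm z) : ℝ)/2) * v z' else 0)
      = ((n : ℝ)/4 + (hamW (π.symm z) : ℝ)/2) * v z := by simp
  have h2 : (∑ z' : BitStr n, ∑ i : Fin n, if z' = bflip z i then -(1/4 : ℝ) * v z' else 0)
      = ∑ i : Fin n, -(1/4 : ℝ) * v (bflip z i) := by
    rw [Finset.sum_comm]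
    exact Finset.sum_congr rfl fun i _ => by simp
  rw [Finset.sum_congr rfl fun z' _ => key z', Finset.sum_add_distrib, h1, h2, ← Finset.mul_sum]
  ring


/-! ### Quadratic form lower bound from the test-vector condition -/

lemma quad_bound (π : Equiv.Perm (BitStr n)) {δ : ℝ} (hδ : 0 < δ)
    (hS : ∀ z : BitStr n, ∑ i : Fin n, (1 : ℝ)/((hamW (π.symm (bflip z i)) : ℝ) + δ) ≤ 2)
    (v : BitStr n → ℝ) :
    ((n : ℝ)/4 - δ/2) * (v ⬝ᵥ v) ≤ v ⬝ᵥ (Hpi n π (1/2) *ᵥ v) := by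
  set w : BitStr n → ℝ := fun z => (hamW (π.symm z) : ℝ) with hw
  have hwpos : ∀ z, 0 < w z + δ := fun z => by positivity
  -- rewrite the quadratic form
  have hqf : v ⬝ᵥ (Hpi n π (1/2) *ᵥ v)
      = ∑ z : BitStr n, ((n : ℝ)/4 + w z/2) * (v z)^2
        - (1/4) * ∑ z : BitStr n, ∑ i : Fin n, v z * v (bflip z i) := by
    show (∑ z : BitStr n, v z * (Hpi n π (1/2) *ᵥ v) z) = _
    rw [Finset.sum_congr rfl fun z _ => by rw [hpi_mulVec π v z]]
    rw [Finset.mul_sum, ← Finset.sum_sub_distrib]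
    refine Finset.sum_congr rfl fun z _ => ?_
    rw [← Finset.mul_sum]
    ring
  -- pointwise weighted AM-GM
  have point : ∀ (z : BitStr n) (i : Fin n),
      v z * v (bflip z i) ≤
        (((w z + δ)/(w (bflip z i) + δ)) * (v z)^2
          + ((w (bflip z i) + δ)/(w z + δ)) * (v (bflip z i))^2) / 2 := by
    intro z i
    have hA := hwpos z
    have hB := hwpos (bflip z i)
    rw [← sub_nonneg]
    have expand : (((w z + δ)/(w (bflip z i) + δ)) * (v z)^2
          + ((w (bflip z i) + δ)/(w z + δ)) * (v (bflip z i))^2) / 2 - v z * v (bflip z i)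
        = ((w z + δ) * v z - (w (bflip z i) + δ) * v (bflip z i))^2
            / (2 * ((w z + δ) * (w (bflip z i) + δ))) := by
      field_simp
      ring
    rw [expand]
    positivity
  -- reindexing the second half of the AM-GM bound
  have reidx : ∑ z : BitStr n, ∑ i : Fin n, ((w (bflip z i) + δ)/(w z + δ)) * (v (bflip z i))^2
      = ∑ z : BitStr n, ∑ i : Fin n, ((w z + δ)/(w (bflip z i) + δ)) * (v z)^2 := by
    rw [← Fintype.sum_prod_type']
    rw [← Fintype.sum_prod_type']
    refine Fintype.sum_equiv ⟨fun p => (bflip p.1 p.2, p.2), fun p => (bflip p.1 p.2, p.2),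
      fun p => by simp [bflip_bflip], fun p => by simp [bflip_bflip]⟩ _ _ fun p => ?_
    simp only [Equiv.coe_fn_mk, bflip_bflip]
  -- cross-term bound
  have cross : ∑ z : BitStr n, ∑ i : Fin n, v z * v (bflip z i)
      ≤ ∑ z : BitStr n, 2 * (w z + δ) * (v z)^2 := by
    calc ∑ z : BitStr n, ∑ i : Fin n, v z * v (bflip z i)
        ≤ ∑ z : BitStr n, ∑ i : Fin n,
            (((w z + δ)/(w (bflip z i) + δ)) * (v z)^2
              + ((w (bflip z i) + δ)/(w z + δ)) * (v (bflip z i))^2) / 2 :=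
          Finset.sum_le_sum fun z _ => Finset.sum_le_sum fun i _ => point z i
      _ = ∑ z : BitStr n, ∑ i : Fin n, ((w z + δ)/(w (bflip z i) + δ)) * (v z)^2 := by
          have hL : ∑ z : BitStr n, ∑ i : Fin n,
                (((w z + δ)/(w (bflip z i) + δ)) * (v z)^2
                  + ((w (bflip z i) + δ)/(w z + δ)) * (v (bflip z i))^2) / 2
              = (∑ z : BitStr n, ∑ i : Fin n, ((w z + δ)/(w (bflip z i) + δ)) * (v z)^2)/2
                + (∑ z : BitStr n, ∑ i : Fin n,
                    ((w (bflip z i) + δ)/(w z + δ)) * (v (bflip z i))^2)/2 := by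
            simp only [add_div, Finset.sum_add_distrib, Finset.sum_div]
          rw [hL, reidx]
          ring
      _ ≤ ∑ z : BitStr n, 2 * (w z + δ) * (v z)^2 := by
          refine Finset.sum_le_sum fun z _ => ?_
          have hsum : ∑ i : Fin n, ((w z + δ)/(w (bflip z i) + δ)) * (v z)^2
              = ((w z + δ) * (v z)^2) * ∑ i : Fin n, 1/(w (bflip z i) + δ) := by
            rw [Finset.mul_sum]
            refine Finset.sum_congr rfl fun i _ => ?_
            rw [div_eq_mul_inv, one_div]
            ring
          rw [hsum]
          calc ((w z + δ) * (v z)^2) * ∑ i : Fin n, 1/(w (bflip z i) + δ)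
              ≤ ((w z + δ) * (v z)^2) * 2 := by
                refine mul_le_mul_of_nonneg_left (hS z) ?_
                have := hwpos z
                positivity
            _ = 2 * (w z + δ) * (v z)^2 := by ring
  -- final combination
  rw [hqf]
  have hvv : v ⬝ᵥ v = ∑ z : BitStr n, (v z)^2 := by
    simp [dotProduct, sq]
  rw [hvv, Finset.mul_sum]
  calc ∑ z : BitStr n, ((n : ℝ)/4 - δ/2) * (v z)^2
      = ∑ z : BitStr n, (((n : ℝ)/4 + w z/2) * (v z)^2 - (1/4) * (2*(w z + δ)*(v z)^2)) :=
        Finset.sum_congr rfl fun z _ => by ring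
    _ = ∑ z : BitStr n, ((n : ℝ)/4 + w z/2) * (v z)^2
          - (1/4) * ∑ z : BitStr n, 2*(w z + δ)*(v z)^2 := by
        rw [Finset.sum_sub_distrib, Finset.mul_sum]
    _ ≤ ∑ z : BitStr n, ((n : ℝ)/4 + w z/2) * (v z)^2
          - (1/4) * ∑ z : BitStr n, ∑ i : Fin n, v z * v (bflip z i) := by
        linarith [cross]

/-! ### Hermitian-ness and eigenvalue extraction -/

lemma hpi_herm (π : Equiv.Perm (BitStr n)) (s : ℝ) : (Hpi n π s).IsHermitian := by
  unfold Matrix.IsHermitian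
  ext z z'
  simp only [Matrix.conjTranspose_apply, Hpi, Matrix.of_apply, star_trivial]
  by_cases h : z = z'
  · subst h; simp
  · have h' : ¬ z' = z := fun e => h e.symm
    rw [if_neg h', if_neg h]
    have hfilter : (Finset.univ.filter fun i => z' i ≠ z i)
        = (Finset.univ.filter fun i => z i ≠ z' i) := by
      ext i; simp [ne_comm]
    rw [hfilter]

lemma eigen_ge (π : Equiv.Perm (BitStr n)) {B : ℝ}
    (h : ∀ v : BitStr n → ℝ, B * (v ⬝ᵥ v) ≤ v ⬝ᵥ (Hpi n π (1/2) *ᵥ v))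
    (hH : (Hpi n π (1/2)).IsHermitian) (i : BitStr n) : B ≤ hH.eigenvalues i := by
  set v : BitStr n → ℝ := (WithLp.equiv 2 _) (hH.eigenvectorBasis i) with hv
  have hmul : Hpi n π (1/2) *ᵥ v = hH.eigenvalues i • v := hH.mulVec_eigenvectorBasis i
  have hvne : v ≠ 0 := by
    intro h0
    refine hH.eigenvectorBasis.orthonormal.ne_zero i ?_
    have h1 := congrArg (WithLp.equiv 2 (∀ _ : BitStr n, ℝ)).symm h0
    rw [show (WithLp.equiv 2 (∀ _ : BitStr n, ℝ)).symm 0 = 0 from rfl] at h1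
    rw [← h1, hv, Equiv.symm_apply_apply]
  have hnn : (0:ℝ) ≤ v ⬝ᵥ v := Finset.sum_nonneg fun z _ => mul_self_nonneg (v z)
  have hne : v ⬝ᵥ v ≠ 0 := fun h0 => hvne (dotProduct_self_eq_zero.mp h0)
  have hpos : 0 < v ⬝ᵥ v := lt_of_le_of_ne hnn (Ne.symm hne)
  have hchain : B * (v ⬝ᵥ v) ≤ hH.eigenvalues i * (v ⬝ᵥ v) := by
    have h2 := h v
    rw [hmul] at h2
    rw [dotProduct_smul] at h2
    simpa [smul_eq_mul] using h2
  exact le_of_mul_le_mul_right hchain hpos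

lemma epi_ge (π : Equiv.Perm (BitStr n)) {B : ℝ}
    (h : ∀ v : BitStr n → ℝ, B * (v ⬝ᵥ v) ≤ v ⬝ᵥ (Hpi n π (1/2) *ᵥ v)) :
    B ≤ Epi n π (1/2) := by
  have hmem : ∀ x ∈ sortedEigs (Hpi n π (1/2)), B ≤ x := by
    intro x hx
    unfold sortedEigs at hx
    split at hx
    case isTrue hH =>
      rw [Multiset.mem_sort] at hx
      rw [Multiset.mem_map] at hx
      obtain ⟨i, _, rfl⟩ := hx
      exact eigen_ge π h hH i
    case isFalse => simp at hx
  have hlen : 0 < (sortedEigs (Hpi n π (1/2))).length := by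
    unfold sortedEigs
    rw [dif_pos (hpi_herm π (1/2))]
    rw [Multiset.length_sort, Multiset.card_map]
    show 0 < Finset.univ.card
    rw [Finset.card_univ]
    exact Fintype.card_pos
  show B ≤ (sortedEigs (Hpi n π (1/2))).getD 0 0
  rw [List.getD_eq_getElem _ _ hlen]
  exact hmem _ (List.getElem_mem _)


/-! ### Counting over permutations -/

lemma fiber_card_le {α : Type*} [Fintype α] [DecidableEq α] {ι : Type*} [Fintype ι]
    (y t : ι → α) (hy : Function.Injective y) :
    (Finset.univ.filter fun π : Equiv.Perm α => ∀ i, π.symm (y i) = t i).card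
      ≤ (Fintype.card α - Fintype.card ι).factorial := by
  classical
  set F := Finset.univ.filter (fun π : Equiv.Perm α => ∀ i, π.symm (y i) = t i) with hF
  rcases Finset.eq_empty_or_nonempty F with hFe | ⟨π₀, hπ₀⟩
  · rw [hFe]; simp [Nat.factorial_pos]
  · have hmem : ∀ {π : Equiv.Perm α}, π ∈ F → ∀ i, π (t i) = y i := by
      intro π hπ i
      rw [hF, Finset.mem_filter] at hπ
      rw [← hπ.2 i, Equiv.apply_symm_apply]
    set St := Finset.univ.image t with hSt
    set Sy := Finset.univ.image y with hSy
    have key : ∀ {π : Equiv.Perm α}, π ∈ F → ∀ x : α, x ∉ St ↔ π x ∉ Sy := by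
      intro π hπ x
      rw [not_iff_not]
      simp only [hSt, hSy, Finset.mem_image, Finset.mem_univ, true_and]
      constructor
      · rintro ⟨i, rfl⟩; exact ⟨i, (hmem hπ i).symm⟩
      · rintro ⟨i, hi⟩
        refine ⟨i, π.injective ?_⟩
        rw [hmem hπ i]
        exact hi
    have ht_inj : Function.Injective t := by
      have hteq : t = fun i => π₀.symm (y i) := by
        funext i
        rw [hF, Finset.mem_filter] at hπ₀
        rw [← hπ₀.2 i]
      rw [hteq]
      exact fun i j hij => hy (by simpa using congrArg π₀ hij)
    -- the injection into equivalences between complements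
    set Φ : Equiv.Perm α → ({x : α // x ∉ St} ≃ {x : α // x ∉ Sy}) :=
      fun π => if h : π ∈ F then Equiv.subtypeEquiv π (key h)
        else Equiv.subtypeEquiv π₀ (key hπ₀) with hΦ
    have hinj : Set.InjOn Φ F := by
      intro π1 h1' π2 h2' h12
      have h1 : π1 ∈ F := Finset.mem_coe.mp h1'
      have h2 : π2 ∈ F := Finset.mem_coe.mp h2'
      ext x
      by_cases hx : x ∈ St
      · rw [hSt, Finset.mem_image] at hx
        obtain ⟨i, _, rfl⟩ := hx
        rw [hmem h1 i, hmem h2 i]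
      · have happ := congrArg (fun (e : {x : α // x ∉ St} ≃ {x : α // x ∉ Sy}) =>
          (e ⟨x, hx⟩ : {x : α // x ∉ Sy}).val) h12
        simp only [hΦ, dif_pos h1, dif_pos h2, Equiv.subtypeEquiv_apply] at happ
        exact happ
    have hcard : F.card ≤ Fintype.card ({x : α // x ∉ St} ≃ {x : α // x ∉ Sy}) := by
      have := Finset.card_le_card_of_injOn Φ (fun a _ => Finset.mem_univ _) hinj
      simpa using this
    have hcard2 : Fintype.card ({x : α // x ∉ St} ≃ {x : α // x ∉ Sy})
        = (Fintype.card {x : α // x ∉ St}).factorial :=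
      Fintype.card_equiv (Equiv.subtypeEquiv π₀ (key hπ₀))
    have hcard3 : Fintype.card {x : α // x ∉ St} = Fintype.card α - Fintype.card ι := by
      have hc : Fintype.card {x : α // ¬ (x ∈ St)}
          = Fintype.card α - Fintype.card {x : α // x ∈ St} :=
        Fintype.card_subtype_compl _
      rw [hc, Fintype.card_coe]
      congr 1
      rw [hSt, Finset.card_image_of_injective _ ht_inj, Finset.card_univ]
    rw [hcard2, hcard3] at hcard
    exact hcard

lemma sum_perm_prod_le {α : Type*} [Fintype α] [DecidableEq α] {ι : Type*} [Fintype ι]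
    (g : α → ℝ) (hg : ∀ x, 0 ≤ g x) (y : ι → α) (hy : Function.Injective y) :
    ∑ π : Equiv.Perm α, ∏ i : ι, g (π.symm (y i))
      ≤ ((Fintype.card α - Fintype.card ι).factorial : ℝ)
          * (∑ x : α, g x) ^ (Fintype.card ι) := by
  classical
  have hdecomp : ∑ π : Equiv.Perm α, ∏ i : ι, g (π.symm (y i))
      = ∑ t : ι → α, ∑ π ∈ Finset.univ.filter
          (fun π : Equiv.Perm α => (fun i => π.symm (y i)) = t), ∏ i, g (π.symm (y i)) :=
    (Finset.sum_fiberwise _ _ _).symm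
  rw [hdecomp]
  have hbound : ∀ t : ι → α,
      ∑ π ∈ Finset.univ.filter (fun π : Equiv.Perm α => (fun i => π.symm (y i)) = t),
          ∏ i, g (π.symm (y i))
        ≤ ((Fintype.card α - Fintype.card ι).factorial : ℝ) * ∏ i, g (t i) := by
    intro t
    have hval : ∀ π ∈ Finset.univ.filter
        (fun π : Equiv.Perm α => (fun i => π.symm (y i)) = t),
        ∏ i, g (π.symm (y i)) = ∏ i, g (t i) := by
      intro π hπ
      rw [Finset.mem_filter] at hπ
      exact Finset.prod_congr rfl fun i _ => by rw [congrFun hπ.2 i]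
    rw [Finset.sum_congr rfl hval, Finset.sum_const, nsmul_eq_mul]
    have hsub : (Finset.univ.filter
          (fun π : Equiv.Perm α => (fun i => π.symm (y i)) = t)).card
        ≤ (Fintype.card α - Fintype.card ι).factorial := by
      refine le_trans (le_of_eq ?_) (fiber_card_le y t hy)
      congr 1
      ext π
      simp [funext_iff]
    have hprodnn : (0:ℝ) ≤ ∏ i, g (t i) := Finset.prod_nonneg fun i _ => hg _
    exact mul_le_mul_of_nonneg_right (by exact_mod_cast hsub) hprodnn
  calc ∑ t : ι → α, ∑ π ∈ Finset.univ.filter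
        (fun π : Equiv.Perm α => (fun i => π.symm (y i)) = t), ∏ i, g (π.symm (y i))
      ≤ ∑ t : ι → α, ((Fintype.card α - Fintype.card ι).factorial : ℝ) * ∏ i, g (t i) :=
        Finset.sum_le_sum fun t _ => hbound t
    _ = ((Fintype.card α - Fintype.card ι).factorial : ℝ) * ∑ t : ι → α, ∏ i, g (t i) := by
        rw [Finset.mul_sum]
    _ = ((Fintype.card α - Fintype.card ι).factorial : ℝ) * (∑ x : α, g x) ^ (Fintype.card ι) := by
        congr 1
        rw [← Fintype.piFinset_univ, ← Finset.prod_univ_sum (fun _ => Finset.univ) (fun _ x => g x)]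
        rw [Finset.prod_const, Finset.card_univ]


lemma avg_perm_prod_le {α : Type*} [Fintype α] [DecidableEq α] {ι : Type*} [Fintype ι]
    (g : α → ℝ) (hg : ∀ x, 0 ≤ g x) (y : ι → α) (hy : Function.Injective y)
    (hNpos : 0 < Fintype.card α)
    (hm : 2 * (Fintype.card ι)^2 ≤ Fintype.card α) :
    ∑ π : Equiv.Perm α, ∏ i : ι, g (π.symm (y i))
      ≤ 2 * ((Fintype.card α).factorial : ℝ)
          * ((∑ x : α, g x) / (Fintype.card α)) ^ (Fintype.card ι) := by
  classical
  set N := Fintype.card α with hN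
  set m := Fintype.card ι with hm'
  have hmN : m ≤ N := by nlinarith [sq_nonneg m, Nat.zero_le m]
  have hNR : (0:ℝ) < (N:ℝ) := by exact_mod_cast hNpos
  have hmR : ((m:ℝ)) ≤ (N:ℝ) := by exact_mod_cast hmN
  -- key factorial inequality over ℝ
  have hkey : ((N - m).factorial : ℝ) * (N:ℝ)^m ≤ 2 * (N.factorial : ℝ) := by
    have h1 : ((N - m)^m : ℕ) * (N - m).factorial ≤ N.factorial := by
      calc (N - m)^m * (N - m).factorial
          ≤ N.descFactorial m * (N - m).factorial := by
            refine Nat.mul_le_mul_right _ ?_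
            calc (N - m)^m ≤ (N + 1 - m)^m :=
                  Nat.pow_le_pow_left (by omega) m
              _ ≤ N.descFactorial m := Nat.pow_sub_le_descFactorial N m
        _ = N.factorial := by
            rw [mul_comm]
            exact Nat.factorial_mul_descFactorial hmN
    have h1R : (((N:ℝ) - m))^m * ((N - m).factorial : ℝ) ≤ (N.factorial : ℝ) := by
      have := h1
      have hcast : (((N - m) : ℕ) : ℝ) = (N:ℝ) - m := by
        rw [Nat.cast_sub hmN]
      calc ((N:ℝ) - m)^m * ((N - m).factorial : ℝ)
          = (((N - m)^m * (N - m).factorial : ℕ) : ℝ) := by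
            push_cast [hcast]
            ring
        _ ≤ (N.factorial : ℝ) := by exact_mod_cast h1
    -- Bernoulli: N^m ≤ 2 (N - m)^m
    have hber : (N:ℝ)^m ≤ 2 * ((N:ℝ) - m)^m := by
      have hfrac : (m:ℝ)/(N:ℝ) ≤ 1 := by
        rw [div_le_one hNR]; exact hmR
      have hx : (-2:ℝ) ≤ -((m:ℝ)/(N:ℝ)) := by
        have : (0:ℝ) ≤ (m:ℝ)/(N:ℝ) := by positivity
        linarith
      have hbern := one_add_mul_le_pow hx m
      have hhalf : (1:ℝ)/2 ≤ 1 + (m:ℝ) * (-((m:ℝ)/(N:ℝ))) := by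
        have h2m : 2*(m:ℝ)^2 ≤ (N:ℝ) := by exact_mod_cast hm
        have hd : (m:ℝ) * ((m:ℝ)/(N:ℝ)) = (m:ℝ)^2 / (N:ℝ) := by ring
        have : (m:ℝ)^2/(N:ℝ) ≤ 1/2 := by
          rw [div_le_div_iff₀ hNR (by norm_num : (0:ℝ) < 2)]
          linarith
        rw [mul_neg, hd]
        linarith
      have hpow : (1:ℝ)/2 ≤ (1 - (m:ℝ)/(N:ℝ))^m := by
        have : (1:ℝ) + (m:ℝ) * (-((m:ℝ)/(N:ℝ))) ≤ (1 + (-((m:ℝ)/(N:ℝ))))^m := hbern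
        calc (1:ℝ)/2 ≤ 1 + (m:ℝ) * (-((m:ℝ)/(N:ℝ))) := hhalf
          _ ≤ (1 + (-((m:ℝ)/(N:ℝ))))^m := hbern
          _ = (1 - (m:ℝ)/(N:ℝ))^m := by ring_nf
      have hNm : ((N:ℝ) - m)^m = (N:ℝ)^m * (1 - (m:ℝ)/(N:ℝ))^m := by
        rw [← mul_pow]
        congr 1
        field_simp
      rw [hNm]
      have hNpow : (0:ℝ) ≤ (N:ℝ)^m := by positivity
      nlinarith
    calc ((N - m).factorial : ℝ) * (N:ℝ)^m
        ≤ ((N - m).factorial : ℝ) * (2 * ((N:ℝ) - m)^m) := by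
          refine mul_le_mul_of_nonneg_left hber ?_
          positivity
      _ = 2 * (((N:ℝ) - m)^m * ((N - m).factorial : ℝ)) := by ring
      _ ≤ 2 * (N.factorial : ℝ) := by linarith
  have hSnn : (0:ℝ) ≤ ∑ x : α, g x := Finset.sum_nonneg fun x _ => hg x
  calc ∑ π : Equiv.Perm α, ∏ i : ι, g (π.symm (y i))
      ≤ ((N - m).factorial : ℝ) * (∑ x : α, g x) ^ m := sum_perm_prod_le g hg y hy
    _ = (((N - m).factorial : ℝ) * (N:ℝ)^m) * ((∑ x : α, g x) / (N:ℝ)) ^ m := by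
        rw [div_pow]
        have hNm : ((N:ℝ))^m ≠ 0 := by positivity
        field_simp
    _ ≤ (2 * (N.factorial : ℝ)) * ((∑ x : α, g x) / (N:ℝ)) ^ m := by
        refine mul_le_mul_of_nonneg_right hkey ?_
        positivity

/-! ### sums over bit strings -/

lemma hamW_le {n : ℕ} (z : BitStr n) : hamW z ≤ n := by
  calc hamW z ≤ Finset.univ.card := Finset.card_filter_le _ _
    _ = n := by simp

lemma hamW_as_sum {n : ℕ} (z : BitStr n) :
    ((hamW z : ℝ)) = ∑ i : Fin n, (if z i = true then (1:ℝ) else 0) := by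
  unfold hamW
  rw [Finset.card_filter]
  push_cast
  rfl

lemma sum_exp_hamW {n : ℕ} (c : ℝ) :
    ∑ x : BitStr n, Real.exp (c * (hamW x : ℝ)) = (1 + Real.exp c)^n := by
  have hterm : ∀ x : BitStr n, Real.exp (c * (hamW x : ℝ))
      = ∏ i : Fin n, Real.exp (c * (if x i = true then (1:ℝ) else 0)) := by
    intro x
    rw [hamW_as_sum, Finset.mul_sum, Real.exp_sum]
  rw [Finset.sum_congr rfl fun x _ => hterm x]
  have := Finset.prod_univ_sum (fun _ : Fin n => (Finset.univ : Finset Bool))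
    (fun _ b => Real.exp (c * (if b = true then (1:ℝ) else 0)))
  rw [Fintype.piFinset_univ] at this
  rw [← this]
  have hbool : ∀ _i : Fin n, ∑ b : Bool, Real.exp (c * (if b = true then (1:ℝ) else 0))
      = 1 + Real.exp c := by
    intro i
    rw [Fintype.sum_bool]
    simp [Real.exp_zero]
    ring
  rw [Finset.prod_congr rfl fun i _ => hbool i]
  rw [Finset.prod_const, Finset.card_univ, Fintype.card_fin]

-- the complement involution
lemma hamW_compl {n : ℕ} (x : BitStr n) : (hamW (fun i => !(x i)) : ℝ) = n - (hamW x : ℝ) := by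
  have key : (Finset.univ.filter fun i => (!(x i)) = true).card
      = n - (Finset.univ.filter fun i => x i = true).card := by
    have hsplit : (Finset.univ.filter fun i => (!(x i)) = true)
        = Finset.univ \ (Finset.univ.filter fun i => x i = true) := by
      ext i
      rcases hx : x i <;> simp [hx]
    rw [hsplit, Finset.card_sdiff_of_subset (Finset.filter_subset _ _)]
    simp
  unfold hamW
  rw [key]
  have hle : (Finset.univ.filter fun i => x i = true).card ≤ n := hamW_le x
  push_cast [Nat.cast_sub hle]
  simp

lemma sum_reflect {n : ℕ} (F : ℝ → ℝ) :
    ∑ x : BitStr n, F ((hamW x : ℝ)) = ∑ x : BitStr n, F ((n:ℝ) - (hamW x : ℝ)) := by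
  refine Fintype.sum_equiv ⟨fun x => fun i => !(x i), fun x => fun i => !(x i),
     fun x => by funext i; simp, fun x => by funext i; simp⟩ _ _ fun x => ?_
  simp only [Equiv.coe_fn_mk]
  rw [hamW_compl]
  ring_nf

-- second moment
lemma sum_var {n : ℕ} :
    ∑ x : BitStr n, ((hamW x : ℝ) - (n:ℝ)/2)^2 = 2^n * ((n:ℝ)/4) := by
  have hc : ∀ x : BitStr n, (hamW x : ℝ) - (n:ℝ)/2
      = ∑ i : Fin n, (if x i = true then (1/2 : ℝ) else -(1/2)) := by
    intro x
    rw [hamW_as_sum]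
    have : ((n:ℝ)/2) = ∑ _i : Fin n, (1/2 : ℝ) := by
      rw [Finset.sum_const, Finset.card_univ, Fintype.card_fin, nsmul_eq_mul]
      ring
    rw [this, ← Finset.sum_sub_distrib]
    refine Finset.sum_congr rfl fun i _ => ?_
    split <;> norm_num
  set c : Bool → ℝ := fun b => if b = true then (1/2 : ℝ) else -(1/2) with hcdef
  have hsq : ∀ x : BitStr n, ((hamW x : ℝ) - (n:ℝ)/2)^2
      = ∑ i : Fin n, ∑ j : Fin n, c (x i) * c (x j) := by
    intro x
    rw [hc x, sq, Finset.sum_mul_sum]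
  rw [Finset.sum_congr rfl fun x _ => hsq x]
  rw [Finset.sum_comm]
  have hdiag : ∀ i : Fin n, ∑ x : BitStr n, ∑ j : Fin n, c (x i) * c (x j)
      = 2^n * (1/4 : ℝ) := by
    intro i
    rw [Finset.sum_comm]
    have hij : ∀ j : Fin n, ∑ x : BitStr n, c (x i) * c (x j)
        = if j = i then 2^n * (1/4:ℝ) else 0 := by
      intro j
      by_cases hj : j = i
      · subst hj
        rw [if_pos rfl]
        have : ∀ x : BitStr n, c (x j) * c (x j) = (1/4 : ℝ) := by
          intro x
          rw [hcdef]
          rcases x j <;> simp <;> norm_num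
        rw [Finset.sum_congr rfl fun x _ => this x, Finset.sum_const, Finset.card_univ,
          nsmul_eq_mul]
        have : Fintype.card (BitStr n) = 2^n := by
          rw [Fintype.card_fun, Fintype.card_bool, Fintype.card_fin]
        rw [this]
        push_cast
        ring
      · rw [if_neg hj]
        -- involution flipping coordinate i
        refine Finset.sum_involution (fun x _ => bflip x i) ?_ ?_ (fun x _ => Finset.mem_univ _) ?_
        · intro x _
          have h1 : c (bflip x i i) = - c (x i) := by
            rw [bflip_apply_self, hcdef]
            rcases x i <;> simp
          have h2 : c (bflip x i j) = c (x j) := by rw [bflip_apply_ne x hj]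
          rw [h1, h2]
          ring
        · intro x _ _
          exact fun h => bflip_ne x i h
        · intro x _
          exact bflip_bflip x i
    rw [Finset.sum_congr rfl fun j _ => hij j]
    rw [Finset.sum_ite_eq' Finset.univ i fun _ => 2^n * (1/4:ℝ)]
    simp
  rw [Finset.sum_congr rfl fun i _ => hdiag i]
  rw [Finset.sum_const, Finset.card_univ, Fintype.card_fin, nsmul_eq_mul]
  ring


/-! ### analytic helper lemmas -/

lemma exp_add_exp_neg_le {u : ℝ} (hu0 : 0 ≤ u) (hu1 : u ≤ 1) :
    Real.exp u + Real.exp (-u) ≤ 2 * Real.exp (u^2) := by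
  have habs : |u| ≤ 1 := by rwa [abs_of_nonneg hu0]
  have habs' : |(-u)| ≤ 1 := by rwa [abs_neg]
  have h1 := Real.exp_bound habs (by norm_num : 0 < 2)
  have h2 := Real.exp_bound habs' (by norm_num : 0 < 2)
  rw [abs_of_nonneg hu0] at h1
  rw [abs_neg, abs_of_nonneg hu0] at h2
  have hs1 : ∑ m ∈ Finset.range 2, u ^ m / (m.factorial : ℝ) = 1 + u := by
    simp [Finset.sum_range_succ]
  have hs2 : ∑ m ∈ Finset.range 2, (-u) ^ m / (m.factorial : ℝ) = 1 - u := by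
    simp [Finset.sum_range_succ]
    ring
  rw [hs1] at h1
  rw [hs2] at h2
  have hb1 : Real.exp u ≤ 1 + u + u^2 * (3 / 4) := by
    have hh := (abs_le.mp h1).2
    norm_num [Nat.factorial] at hh
    linarith
  have hb2 : Real.exp (-u) ≤ 1 - u + u^2 * (3 / 4) := by
    have hh := (abs_le.mp h2).2
    norm_num [Nat.factorial] at hh
    linarith
  have hexp : 1 + u^2 ≤ Real.exp (u^2) := by
    have := Real.add_one_le_exp (u^2)
    linarith
  nlinarith [sq_nonneg u]

lemma tail_card_le {n : ℕ} {b : ℝ} (hb : 0 ≤ b) (hbn : b ≤ (n:ℝ)) (hn : 0 < n) :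
    ((Finset.univ.filter fun x : BitStr n => (hamW x : ℝ) < (n:ℝ)/2 - b).card : ℝ)
      ≤ 2^n * Real.exp (-(b^2/(n:ℝ))) := by
  have hnR : (0:ℝ) < (n:ℝ) := by exact_mod_cast hn
  set s : ℝ := 2*b/n with hs
  have hs0 : 0 ≤ s := by positivity
  have hcard : ((Finset.univ.filter fun x : BitStr n => (hamW x : ℝ) < (n:ℝ)/2 - b).card : ℝ)
      ≤ ∑ x : BitStr n, Real.exp (s * ((n:ℝ)/2 - b - (hamW x:ℝ))) := by
    rw [Finset.card_filter]
    push_cast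
    refine Finset.sum_le_sum fun x _ => ?_
    by_cases hx : (hamW x : ℝ) < (n:ℝ)/2 - b
    · rw [if_pos hx]
      refine Real.one_le_exp ?_
      have : (0:ℝ) ≤ (n:ℝ)/2 - b - (hamW x:ℝ) := by linarith
      exact mul_nonneg hs0 this
    · rw [if_neg hx]
      positivity
  have hsum : ∑ x : BitStr n, Real.exp (s * ((n:ℝ)/2 - b - (hamW x:ℝ)))
      = Real.exp (s*((n:ℝ)/2 - b)) * (1 + Real.exp (-s))^n := by
    have hx : ∀ x : BitStr n, Real.exp (s * ((n:ℝ)/2 - b - (hamW x:ℝ)))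
        = Real.exp (s*((n:ℝ)/2 - b)) * Real.exp ((-s) * (hamW x:ℝ)) := by
      intro x
      rw [← Real.exp_add]
      ring_nf
    rw [Finset.sum_congr rfl fun x _ => hx x, ← Finset.mul_sum, sum_exp_hamW]
  have hfac : (1 + Real.exp (-s)) = Real.exp (-(s/2)) * (Real.exp (s/2) + Real.exp (-(s/2))) := by
    rw [mul_add, ← Real.exp_add, ← Real.exp_add]
    have e1 : -(s/2) + s/2 = 0 := by ring
    have e2 : -(s/2) + -(s/2) = -s := by ring
    rw [e1, e2, Real.exp_zero]
  have hu0 : 0 ≤ s/2 := by positivity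
  have hu1 : s/2 ≤ 1 := by
    rw [hs]
    have heq : 2*b/(n:ℝ)/2 = b/n := by ring
    rw [heq, div_le_one hnR]
    linarith
  have hcosh : Real.exp (s/2) + Real.exp (-(s/2)) ≤ 2*Real.exp ((s/2)^2) :=
    exp_add_exp_neg_le hu0 hu1
  have hfinal : Real.exp (s*((n:ℝ)/2 - b)) * (1 + Real.exp (-s))^n
      ≤ 2^n * Real.exp (-(b^2/(n:ℝ))) := by
    calc Real.exp (s*((n:ℝ)/2 - b)) * (1 + Real.exp (-s))^n
        = Real.exp (s*((n:ℝ)/2 - b)) * (Real.exp (-(s/2)))^n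
            * (Real.exp (s/2) + Real.exp (-(s/2)))^n := by
          rw [hfac, mul_pow]
          ring
      _ ≤ Real.exp (s*((n:ℝ)/2 - b)) * (Real.exp (-(s/2)))^n * (2*Real.exp ((s/2)^2))^n := by
          refine mul_le_mul_of_nonneg_left (pow_le_pow_left₀ (by positivity) hcosh n) ?_
          positivity
      _ = 2^n * Real.exp (s*((n:ℝ)/2 - b) + (n:ℝ)*(-(s/2)) + (n:ℝ)*((s/2)^2)) := by
          rw [mul_pow, Real.exp_add, Real.exp_add, ← Real.exp_nat_mul, ← Real.exp_nat_mul]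
          ring
      _ = 2^n * Real.exp (-(b^2/(n:ℝ))) := by
          congr 1
          congr 1
          rw [hs]
          field_simp
          ring
  calc ((Finset.univ.filter fun x : BitStr n => (hamW x : ℝ) < (n:ℝ)/2 - b).card : ℝ)
      ≤ ∑ x : BitStr n, Real.exp (s * ((n:ℝ)/2 - b - (hamW x:ℝ))) := hcard
    _ = Real.exp (s*((n:ℝ)/2 - b)) * (1 + Real.exp (-s))^n := hsum
    _ ≤ 2^n * Real.exp (-(b^2/(n:ℝ))) := hfinal

lemma chord_exp {lam r yv : ℝ} (hr : 0 < r) (hy : |yv| ≤ r) :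
    Real.exp (lam * yv) ≤ (Real.exp (lam*r) + Real.exp (-(lam*r)))/2
      + yv * ((Real.exp (lam*r) - Real.exp (-(lam*r)))/(2*r)) := by
  have hy1 : yv ≤ r := (abs_le.mp hy).2
  have hy2 : -r ≤ yv := (abs_le.mp hy).1
  have ha : (0:ℝ) ≤ (r - yv)/(2*r) := by
    apply div_nonneg (by linarith) (by linarith)
  have hb : (0:ℝ) ≤ (r + yv)/(2*r) := by
    apply div_nonneg (by linarith) (by linarith)
  have hab : (r - yv)/(2*r) + (r + yv)/(2*r) = 1 := by
    field_simp
    ring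
  have hconv := convexOn_exp.2 (Set.mem_univ (-(lam*r))) (Set.mem_univ (lam*r)) ha hb hab
  simp only [smul_eq_mul] at hconv
  have harg : (r - yv)/(2*r) * (-(lam*r)) + (r + yv)/(2*r) * (lam*r) = lam * yv := by
    field_simp
    ring
  rw [harg] at hconv
  calc Real.exp (lam*yv)
      ≤ (r - yv)/(2*r) * Real.exp (-(lam*r)) + (r + yv)/(2*r) * Real.exp (lam*r) := hconv
    _ = (Real.exp (lam*r) + Real.exp (-(lam*r)))/2
        + yv * ((Real.exp (lam*r) - Real.exp (-(lam*r)))/(2*r)) := by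
        field_simp
        ring

lemma sum_exp_le_of_range {α : Type*} [Fintype α] (q : α → ℝ) (μ R lam : ℝ) (hR : 0 < R)
    (hmean : ∑ x : α, (q x - μ) = 0) (hrange : ∀ x, |q x - μ| ≤ R) :
    ∑ x : α, Real.exp (lam * q x)
      ≤ (Fintype.card α : ℝ) * Real.exp (lam * μ)
          * ((Real.exp (lam*R) + Real.exp (-(lam*R)))/2) := by
  have hterm : ∀ x, Real.exp (lam * q x) = Real.exp (lam*μ) * Real.exp (lam * (q x - μ)) := by
    intro x
    rw [← Real.exp_add]
    ring_nf
  rw [Finset.sum_congr rfl fun x _ => hterm x, ← Finset.mul_sum]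
  have hsum : ∑ x : α, Real.exp (lam * (q x - μ))
      ≤ (Fintype.card α : ℝ) * ((Real.exp (lam*R) + Real.exp (-(lam*R)))/2) := by
    calc ∑ x : α, Real.exp (lam * (q x - μ))
        ≤ ∑ x : α, ((Real.exp (lam*R) + Real.exp (-(lam*R)))/2
            + (q x - μ) * ((Real.exp (lam*R) - Real.exp (-(lam*R)))/(2*R))) :=
          Finset.sum_le_sum fun x _ => chord_exp hR (hrange x)
      _ = (Fintype.card α : ℝ) * ((Real.exp (lam*R) + Real.exp (-(lam*R)))/2)
          + (∑ x : α, (q x - μ)) * ((Real.exp (lam*R) - Real.exp (-(lam*R)))/(2*R)) := by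
          rw [Finset.sum_add_distrib, Finset.sum_const, Finset.card_univ, nsmul_eq_mul,
            ← Finset.sum_mul]
      _ = _ := by rw [hmean]; ring
  calc Real.exp (lam*μ) * ∑ x : α, Real.exp (lam * (q x - μ))
      ≤ Real.exp (lam*μ) * ((Fintype.card α : ℝ)
          * ((Real.exp (lam*R) + Real.exp (-(lam*R)))/2)) := by
        exact mul_le_mul_of_nonneg_left hsum (le_of_lt (Real.exp_pos _))
    _ = (Fintype.card α : ℝ) * Real.exp (lam * μ)
          * ((Real.exp (lam*R) + Real.exp (-(lam*R)))/2) := by ring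

/-! ### numeric exp bounds -/

lemma exp_numeric_cosh : (Real.exp (5/6) + Real.exp (-(5/6)))/2 ≤ 11/8 := by
  have habs : |(5/6 : ℝ)| ≤ 1 := by rw [abs_of_nonneg] <;> norm_num
  have habs' : |(-(5/6) : ℝ)| ≤ 1 := by rw [abs_neg]; exact habs
  have h1 := Real.exp_bound habs (by norm_num : 0 < 4)
  have h2 := Real.exp_bound habs' (by norm_num : 0 < 4)
  have hs1 : ∑ m ∈ Finset.range 4, (5/6 : ℝ) ^ m / (m.factorial : ℝ) = 2951/1296 := by
    simp [Finset.sum_range_succ, Nat.factorial]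
    norm_num
  have hs2 : ∑ m ∈ Finset.range 4, (-(5/6) : ℝ) ^ m / (m.factorial : ℝ) = 541/1296 := by
    simp [Finset.sum_range_succ, Nat.factorial]
    norm_num
  rw [hs1] at h1
  rw [hs2] at h2
  have habs56 : |(5/6:ℝ)| = 5/6 := abs_of_nonneg (by norm_num)
  have he1 : Real.exp (5/6) ≤ 2951/1296 + 3125/124416 := by
    have hh := (abs_le.mp h1).2
    rw [habs56] at hh
    norm_num [Nat.factorial] at hh
    linarith
  have he2 : Real.exp (-(5/6)) ≤ 541/1296 + 3125/124416 := by
    have hh := (abs_le.mp h2).2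
    rw [abs_neg, habs56] at hh
    norm_num [Nat.factorial] at hh
    linarith
  linarith

lemma exp_numeric_76 : (2 * (11/8) : ℝ) ≤ (9/10) * Real.exp (7/6) := by
  have hlow := Real.sum_le_exp_of_nonneg (by norm_num : (0:ℝ) ≤ 7/6) 5
  have hs : ∑ i ∈ Finset.range 5, (7/6:ℝ)^i / (i.factorial : ℝ) = 99193/31104 := by
    simp [Finset.sum_range_succ, Nat.factorial]
    norm_num
  rw [hs] at hlow
  nlinarith

lemma exp_numeric_11 : (3:ℝ) ≤ Real.exp (11/10) := by
  have hlow := Real.sum_le_exp_of_nonneg (by norm_num : (0:ℝ) ≤ 11/10) 6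
  have hs : ∑ i ∈ Finset.range 6, (11/10:ℝ)^i / (i.factorial : ℝ) = 36015101/12000000 := by
    simp [Finset.sum_range_succ, Nat.factorial]
    norm_num
  rw [hs] at hlow
  nlinarith


/-! ### parameters -/

noncomputable def aP (n : ℕ) : ℝ := (n:ℝ) ^ ((3:ℝ)/4)
noncomputable def dP (n : ℕ) : ℝ := 5/2 * aP n
noncomputable def bP (n : ℕ) : ℝ := 5/8 * aP n
noncomputable def KP (n : ℕ) : ℕ := ⌈3 * (aP n)^2 / (n:ℝ)⌉₊
noncomputable def lamP (n : ℕ) : ℝ := (n:ℝ)^2 / (6 * aP n)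
noncomputable def loP (n : ℕ) : ℝ := (n:ℝ)/2 - bP n
noncomputable def hiP (n : ℕ) : ℝ := (n:ℝ)/2 + bP n
noncomputable def clampP (n : ℕ) (t : ℝ) : ℝ := max (loP n) (min (hiP n) t)
noncomputable def fT (n : ℕ) (t : ℝ) : ℝ := 1 / (clampP n t + dP n)
noncomputable def RP (n : ℕ) : ℝ := 5 * aP n / (n:ℝ)^2
noncomputable def MP (n : ℕ) : ℝ := (n:ℝ)/2 + dP n
noncomputable def mu1 (n : ℕ) : ℝ := (∑ x : BitStr n, fT n ((hamW x : ℝ))) / 2^n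
noncomputable def sP (n : ℕ) : ℝ := 2 - (KP n : ℝ) / dP n

lemma card_bitstr (n : ℕ) : Fintype.card (BitStr n) = 2^n := by
  rw [Fintype.card_fun, Fintype.card_bool, Fintype.card_fin]

section params
variable {n : ℕ} (hn : 1 ≤ n)
include hn

lemma nR_pos : (0:ℝ) < (n:ℝ) := by exact_mod_cast hn

lemma aP_pos : 0 < aP n := Real.rpow_pos_of_pos (nR_pos hn) _

lemma aP_le_n : aP n ≤ (n:ℝ) := by
  have h1 : (1:ℝ) ≤ (n:ℝ) := by exact_mod_cast hn
  calc aP n = (n:ℝ) ^ ((3:ℝ)/4) := rfl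
    _ ≤ (n:ℝ) ^ (1:ℝ) := by
        apply Real.rpow_le_rpow_of_exponent_le h1
        norm_num
    _ = (n:ℝ) := Real.rpow_one _

lemma aP_pow4 : (aP n)^4 = (n:ℝ)^3 := by
  have h0 : (0:ℝ) ≤ (n:ℝ) := le_of_lt (nR_pos hn)
  calc (aP n)^4 = ((n:ℝ) ^ ((3:ℝ)/4)) ^ (4:ℕ) := rfl
    _ = (n:ℝ) ^ (((3:ℝ)/4) * (4:ℕ)) := by
        rw [← Real.rpow_natCast ((n:ℝ) ^ ((3:ℝ)/4)) 4, ← Real.rpow_mul h0]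
    _ = (n:ℝ) ^ ((3:ℝ)) := by norm_num
    _ = (n:ℝ)^(3:ℕ) := by
        rw [← Real.rpow_natCast (n:ℝ) 3]
        norm_num

lemma n_le_aP_sq : (n:ℝ) ≤ (aP n)^2 := by
  -- n ≤ n^{3/2}
  have h1 : (1:ℝ) ≤ (n:ℝ) := by exact_mod_cast hn
  have h0 : (0:ℝ) ≤ (n:ℝ) := by linarith
  have key : (aP n)^2 = (n:ℝ) ^ ((3:ℝ)/2) := by
    calc (aP n)^2 = ((n:ℝ) ^ ((3:ℝ)/4)) ^ (2:ℕ) := rfl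
      _ = (n:ℝ) ^ (((3:ℝ)/4) * (2:ℕ)) := by
          rw [← Real.rpow_natCast ((n:ℝ) ^ ((3:ℝ)/4)) 2, ← Real.rpow_mul h0]
      _ = (n:ℝ) ^ ((3:ℝ)/2) := by norm_num
  rw [key]
  calc (n:ℝ) = (n:ℝ) ^ (1:ℝ) := (Real.rpow_one _).symm
    _ ≤ (n:ℝ) ^ ((3:ℝ)/2) := by
        apply Real.rpow_le_rpow_of_exponent_le h1
        norm_num

lemma lamP_mul_RP : lamP n * RP n = 5/6 := by
  have ha := aP_pos hn
  have hnp := nR_pos hn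
  unfold lamP RP
  field_simp

omit hn in
lemma KP_lb : 3 * (aP n)^2 / (n:ℝ) ≤ (KP n : ℝ) := Nat.le_ceil _

omit hn in
lemma KP_ub : (KP n : ℝ) ≤ 3 * (aP n)^2 / (n:ℝ) + 1 := by
  have h := Nat.ceil_lt_add_one (a := 3 * (aP n)^2 / (n:ℝ))
    (by positivity)
  exact le_of_lt h

lemma dP_pos : 0 < dP n := by
  have := aP_pos hn
  unfold dP
  positivity

lemma bP_nonneg : 0 ≤ bP n := by
  have := aP_pos hn
  unfold bP
  positivity

lemma lo_dP_ge : (n:ℝ)/2 ≤ loP n + dP n := by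
  have := aP_pos hn
  unfold loP dP bP
  nlinarith

lemma hi_dP_ge : (n:ℝ)/2 ≤ hiP n + dP n := by
  have := aP_pos hn
  unfold hiP dP bP
  nlinarith

lemma lo_dP_pos : 0 < loP n + dP n := by
  have h1 : (0:ℝ) < (n:ℝ)/2 := by
    have := nR_pos hn
    linarith
  exact lt_of_lt_of_le h1 (lo_dP_ge hn)

end params

/-! ### clamp and fT facts -/

lemma clamp_gen {l h t s : ℝ} (hs : l + h = s) (hlh : l ≤ h) :
    max l (min h (s - t)) = s - max l (min h t) := by
  rcases le_total t l with h1 | h1 <;> rcases le_total t h with h2 | h2 <;>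
    simp [max_def, min_def] <;> split_ifs <;> linarith

section clampfacts
variable {n : ℕ} (hn : 1 ≤ n)
include hn

lemma lo_le_hi : loP n ≤ hiP n := by
  have := bP_nonneg hn
  unfold loP hiP
  linarith

lemma clamp_ge_lo (t : ℝ) : loP n ≤ clampP n t := le_max_left _ _

lemma clamp_le_hi (t : ℝ) : clampP n t ≤ hiP n :=
  max_le (lo_le_hi hn) (min_le_left _ _)

lemma clamp_le_self {t : ℝ} (h : loP n ≤ t) : clampP n t ≤ t :=
  max_le h (min_le_right _ _)

lemma clamp_reflect (t : ℝ) : clampP n ((n:ℝ) - t) = (n:ℝ) - clampP n t := by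
  unfold clampP
  apply clamp_gen
  · unfold loP hiP
    ring
  · exact lo_le_hi hn

lemma clamp_sq_le (t : ℝ) : (clampP n t - (n:ℝ)/2)^2 ≤ (t - (n:ℝ)/2)^2 := by
  have hb := bP_nonneg hn
  have hlo : loP n ≤ (n:ℝ)/2 := by unfold loP; linarith
  have hhi : (n:ℝ)/2 ≤ hiP n := by unfold hiP; linarith
  have hlh := lo_le_hi hn
  rcases le_total t (loP n) with h1 | h1
  · have : clampP n t = loP n := by
      unfold clampP
      have : min (hiP n) t = t := min_eq_right (le_trans h1 hlh)
      rw [this]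
      exact max_eq_left h1
    rw [this]
    nlinarith
  · rcases le_total t (hiP n) with h2 | h2
    · have : clampP n t = t := by
        unfold clampP
        rw [min_eq_right h2]
        exact max_eq_right h1
      rw [this]
    · have : clampP n t = hiP n := by
        unfold clampP
        rw [min_eq_left h2]
        exact max_eq_right hlh
      rw [this]
      nlinarith

lemma fT_pos (t : ℝ) : 0 < fT n t := by
  have h1 := lo_dP_pos hn
  have h2 := clamp_ge_lo hn (t := t)
  unfold fT
  have : 0 < clampP n t + dP n := by linarith
  positivity

lemma fT_le (t : ℝ) : fT n t ≤ 1/(loP n + dP n) := by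
  have h1 := lo_dP_pos hn
  have h2 := clamp_ge_lo hn (t := t)
  unfold fT
  apply one_div_le_one_div_of_le h1
  linarith

lemma fT_ge (t : ℝ) : 1/(hiP n + dP n) ≤ fT n t := by
  have h1 := lo_dP_pos hn
  have h2 := clamp_ge_lo hn (t := t)
  have h3 := clamp_le_hi hn (t := t)
  unfold fT
  apply one_div_le_one_div_of_le (by linarith)
  linarith

lemma f_le_fT {t : ℝ} (h : loP n ≤ t) : 1/(t + dP n) ≤ fT n t := by
  have h1 := lo_dP_pos hn
  have h2 := clamp_ge_lo hn (t := t)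
  have h3 := clamp_le_self hn h
  unfold fT
  apply one_div_le_one_div_of_le (by linarith)
  linarith

lemma mu1_le : mu1 n ≤ 1/(loP n + dP n) := by
  unfold mu1
  rw [div_le_iff₀ (by positivity : (0:ℝ) < 2^n)]
  calc ∑ x : BitStr n, fT n ((hamW x : ℝ))
      ≤ ∑ _x : BitStr n, 1/(loP n + dP n) := Finset.sum_le_sum fun x _ => fT_le hn _
    _ = 2^n * (1/(loP n + dP n)) := by
        rw [Finset.sum_const, Finset.card_univ, card_bitstr, nsmul_eq_mul]
        push_cast
        ring
    _ = 1/(loP n + dP n) * 2^n := by ring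

lemma mu1_ge : 1/(hiP n + dP n) ≤ mu1 n := by
  unfold mu1
  rw [le_div_iff₀ (by positivity : (0:ℝ) < 2^n)]
  calc 1/(hiP n + dP n) * 2^n = ∑ _x : BitStr n, 1/(hiP n + dP n) := by
        rw [Finset.sum_const, Finset.card_univ, card_bitstr, nsmul_eq_mul]
        push_cast
        ring
    _ ≤ ∑ x : BitStr n, fT n ((hamW x : ℝ)) := Finset.sum_le_sum fun x _ => fT_ge hn _

lemma fT_range (x : BitStr n) : |fT n ((hamW x : ℝ)) - mu1 n| ≤ RP n := by
  have h1 := lo_dP_pos hn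
  have hlo := lo_dP_ge hn
  have hhi := hi_dP_ge hn
  have hnp := nR_pos hn
  have ha := aP_pos hn
  have hgap : 1/(loP n + dP n) - 1/(hiP n + dP n) ≤ RP n := by
    have hA : loP n + dP n ≠ 0 := ne_of_gt h1
    have hB : hiP n + dP n ≠ 0 := by
      have : (0:ℝ) < hiP n + dP n := lt_of_lt_of_le (by linarith) hhi
      exact ne_of_gt this
    have hd : 1/(loP n + dP n) - 1/(hiP n + dP n)
        = (hiP n - loP n)/((loP n + dP n)*(hiP n + dP n)) := by
      rw [div_sub_div _ _ hA hB]
      congr 1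
      ring
    rw [hd]
    have hnum : hiP n - loP n = 2 * bP n := by unfold hiP loP; ring
    have hden : (n:ℝ)/2 * ((n:ℝ)/2) ≤ (loP n + dP n)*(hiP n + dP n) := by
      apply mul_le_mul hlo hhi (by linarith) (by linarith)
    rw [hnum]
    calc 2 * bP n / ((loP n + dP n)*(hiP n + dP n))
        ≤ 2 * bP n / ((n:ℝ)/2 * ((n:ℝ)/2)) := by
          apply div_le_div_of_nonneg_left (by unfold bP; positivity) (by positivity) hden
      _ = RP n := by
          unfold RP bP
          field_simp
          ring
  have hub := fT_le hn (t := ((hamW x : ℝ)))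
  have hlb := fT_ge hn (t := ((hamW x : ℝ)))
  have hm1 := mu1_le hn
  have hm2 := mu1_ge hn
  rw [abs_le]
  constructor <;> nlinarith

lemma mu1_mean_zero : ∑ x : BitStr n, (fT n ((hamW x : ℝ)) - mu1 n) = 0 := by
  rw [Finset.sum_sub_distrib, Finset.sum_const, Finset.card_univ, card_bitstr, nsmul_eq_mul]
  unfold mu1
  have : ((2^n : ℕ) : ℝ) = (2:ℝ)^n := by push_cast; ring
  rw [this]
  field_simp
  ring

lemma clamp_mean_zero : ∑ x : BitStr n, (clampP n ((hamW x : ℝ)) - (n:ℝ)/2) = 0 := by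
  have hrefl := sum_reflect (n := n) (F := fun t => clampP n t - (n:ℝ)/2)
  have hneg : ∀ x : BitStr n, clampP n ((n:ℝ) - (hamW x : ℝ)) - (n:ℝ)/2
      = -(clampP n ((hamW x : ℝ)) - (n:ℝ)/2) := by
    intro x
    rw [clamp_reflect hn]
    ring
  rw [Finset.sum_congr rfl fun x _ => hneg x, Finset.sum_neg_distrib] at hrefl
  linarith

lemma mu1_ub : mu1 n ≤ 1/MP n + 1/(2*(MP n)^2) := by
  have hnp := nR_pos hn
  have hM : (n:ℝ)/2 ≤ MP n := by
    have := dP_pos hn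
    unfold MP
    linarith
  have hMpos : 0 < MP n := lt_of_lt_of_le (by linarith) hM
  have hX : ∀ x : BitStr n, (n:ℝ)/2 ≤ clampP n ((hamW x : ℝ)) + dP n := by
    intro x
    have := clamp_ge_lo hn (t := ((hamW x : ℝ)))
    have := lo_dP_ge hn
    linarith
  have hident : ∀ x : BitStr n, fT n ((hamW x : ℝ))
      = 1/MP n - (clampP n ((hamW x : ℝ)) - (n:ℝ)/2)/(MP n)^2
        + (clampP n ((hamW x : ℝ)) - (n:ℝ)/2)^2
            /((MP n)^2 * (clampP n ((hamW x : ℝ)) + dP n)) := by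
    intro x
    have hXpos : 0 < clampP n ((hamW x : ℝ)) + dP n := lt_of_lt_of_le (by linarith) (hX x)
    have hMeq : clampP n ((hamW x : ℝ)) + dP n - MP n = clampP n ((hamW x : ℝ)) - (n:ℝ)/2 := by
      unfold MP
      ring
    unfold fT
    rw [← hMeq]
    field_simp
    ring
  have hterm3 : ∀ x : BitStr n,
      (clampP n ((hamW x : ℝ)) - (n:ℝ)/2)^2
          /((MP n)^2 * (clampP n ((hamW x : ℝ)) + dP n))
        ≤ ((hamW x : ℝ) - (n:ℝ)/2)^2 / ((MP n)^2 * ((n:ℝ)/2)) := by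
    intro x
    apply div_le_div₀ (sq_nonneg _) (clamp_sq_le hn _) (by positivity)
    apply mul_le_mul_of_nonneg_left (hX x) (by positivity)
  have hsum : ∑ x : BitStr n, fT n ((hamW x : ℝ))
      ≤ 2^n * (1/MP n) + 2^n/(2*(MP n)^2) := by
    calc ∑ x : BitStr n, fT n ((hamW x : ℝ))
        = ∑ x : BitStr n, (1/MP n - (clampP n ((hamW x : ℝ)) - (n:ℝ)/2)/(MP n)^2
            + (clampP n ((hamW x : ℝ)) - (n:ℝ)/2)^2
                /((MP n)^2 * (clampP n ((hamW x : ℝ)) + dP n))) :=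
          Finset.sum_congr rfl fun x _ => hident x
      _ = 2^n * (1/MP n) - (∑ x : BitStr n, (clampP n ((hamW x : ℝ)) - (n:ℝ)/2))/(MP n)^2
            + ∑ x : BitStr n, (clampP n ((hamW x : ℝ)) - (n:ℝ)/2)^2
                /((MP n)^2 * (clampP n ((hamW x : ℝ)) + dP n)) := by
          rw [Finset.sum_add_distrib, Finset.sum_sub_distrib, Finset.sum_const,
            Finset.card_univ, card_bitstr, nsmul_eq_mul, ← Finset.sum_div]
          push_cast
          ring
      _ = 2^n * (1/MP n)
            + ∑ x : BitStr n, (clampP n ((hamW x : ℝ)) - (n:ℝ)/2)^2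
                /((MP n)^2 * (clampP n ((hamW x : ℝ)) + dP n)) := by
          rw [clamp_mean_zero hn]
          ring
      _ ≤ 2^n * (1/MP n) + ∑ x : BitStr n, ((hamW x : ℝ) - (n:ℝ)/2)^2
              / ((MP n)^2 * ((n:ℝ)/2)) := by
          have := Finset.sum_le_sum fun x (_ : x ∈ Finset.univ) => hterm3 x
          linarith
      _ = 2^n * (1/MP n) + (∑ x : BitStr n, ((hamW x : ℝ) - (n:ℝ)/2)^2)
              / ((MP n)^2 * ((n:ℝ)/2)) := by
          rw [← Finset.sum_div]
      _ = 2^n * (1/MP n) + 2^n * ((n:ℝ)/4) / ((MP n)^2 * ((n:ℝ)/2)) := by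
          rw [sum_var]
      _ = 2^n * (1/MP n) + 2^n/(2*(MP n)^2) := by
          congr 1
          field_simp
          ring
  unfold mu1
  rw [div_le_iff₀ (by positivity : (0:ℝ) < 2^n)]
  calc ∑ x : BitStr n, fT n ((hamW x : ℝ))
      ≤ 2^n * (1/MP n) + 2^n/(2*(MP n)^2) := hsum
    _ = (1/MP n + 1/(2*(MP n)^2)) * 2^n := by ring

end clampfacts

/-! ### the good-event implies the test-vector condition -/

lemma good_S_le {n : ℕ} (hn : 1 ≤ n) (π : Equiv.Perm (BitStr n)) (z : BitStr n)
    (hdeep : ((Finset.univ.filter fun i : Fin n =>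
        (hamW (π.symm (bflip z i)) : ℝ) < loP n).card : ℝ) ≤ (KP n : ℝ))
    (hS'' : ∑ i : Fin n, fT n ((hamW (π.symm (bflip z i)) : ℝ)) ≤ sP n) :
    ∑ i : Fin n, (1:ℝ)/((hamW (π.symm (bflip z i)) : ℝ) + dP n) ≤ 2 := by
  have hd := dP_pos hn
  set D := Finset.univ.filter fun i : Fin n =>
      (hamW (π.symm (bflip z i)) : ℝ) < loP n with hD
  have hsplit := Finset.sum_filter_add_sum_filter_not Finset.univ
    (fun i : Fin n => (hamW (π.symm (bflip z i)) : ℝ) < loP n)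
    (fun i : Fin n => (1:ℝ)/((hamW (π.symm (bflip z i)) : ℝ) + dP n))
  have hdeep_sum : ∑ i ∈ D, (1:ℝ)/((hamW (π.symm (bflip z i)) : ℝ) + dP n)
      ≤ (KP n : ℝ) / dP n := by
    calc ∑ i ∈ D, (1:ℝ)/((hamW (π.symm (bflip z i)) : ℝ) + dP n)
        ≤ ∑ _i ∈ D, 1/dP n := by
          refine Finset.sum_le_sum fun i _ => ?_
          apply one_div_le_one_div_of_le hd
          have : (0:ℝ) ≤ (hamW (π.symm (bflip z i)) : ℝ) := Nat.cast_nonneg _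
          linarith
      _ = (D.card : ℝ) * (1/dP n) := by rw [Finset.sum_const, nsmul_eq_mul]
      _ ≤ (KP n : ℝ) * (1/dP n) := by
          apply mul_le_mul_of_nonneg_right hdeep
          positivity
      _ = (KP n : ℝ) / dP n := by ring
  have hshallow_sum : ∑ i ∈ Finset.univ.filter (fun i : Fin n =>
        ¬ ((hamW (π.symm (bflip z i)) : ℝ) < loP n)),
      (1:ℝ)/((hamW (π.symm (bflip z i)) : ℝ) + dP n) ≤ sP n := by
    calc ∑ i ∈ Finset.univ.filter (fun i : Fin n =>
          ¬ ((hamW (π.symm (bflip z i)) : ℝ) < loP n)),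
        (1:ℝ)/((hamW (π.symm (bflip z i)) : ℝ) + dP n)
        ≤ ∑ i ∈ Finset.univ.filter (fun i : Fin n =>
            ¬ ((hamW (π.symm (bflip z i)) : ℝ) < loP n)),
          fT n ((hamW (π.symm (bflip z i)) : ℝ)) := by
          refine Finset.sum_le_sum fun i hi => ?_
          rw [Finset.mem_filter] at hi
          exact f_le_fT hn (not_lt.mp hi.2)
      _ ≤ ∑ i : Fin n, fT n ((hamW (π.symm (bflip z i)) : ℝ)) := by
          refine Finset.sum_le_sum_of_subset_of_nonneg (Finset.filter_subset _ _) ?_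
          intro i _ _
          exact le_of_lt (fT_pos hn _)
      _ ≤ sP n := hS''
  have : ∑ i : Fin n, (1:ℝ)/((hamW (π.symm (bflip z i)) : ℝ) + dP n)
      ≤ (KP n : ℝ)/dP n + sP n := by
    rw [← hsplit]
    exact add_le_add hdeep_sum hshallow_sum
  unfold sP at this
  linarith


/-! ### per-site probability bounds -/

lemma bad2_card {n : ℕ} (hn : 1 ≤ n) (hcard : 2 * n^2 ≤ 2^n)
    (ht : 7 * aP n / (n:ℝ) ≤ sP n - (n:ℝ) * mu1 n)
    (z : BitStr n) :
    ((Finset.univ.filter fun π : Equiv.Perm (BitStr n) =>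
        sP n < ∑ i : Fin n, fT n ((hamW (π.symm (bflip z i)) : ℝ))).card : ℝ)
      ≤ 2 * (((2^n : ℕ).factorial : ℝ)) * ((11/8 : ℝ)^n * Real.exp (-(7/6) * n)) := by
  have ha := aP_pos hn
  have hnp := nR_pos hn
  have hlam : 0 < lamP n := by
    unfold lamP
    positivity
  have hR : 0 < RP n := by
    unfold RP
    positivity
  set lam := lamP n with hlamdef
  set g : BitStr n → ℝ := fun x => Real.exp (lam * fT n ((hamW x : ℝ))) with hg
  have hgnn : ∀ x, 0 ≤ g x := fun x => le_of_lt (Real.exp_pos _)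
  -- step 1: Chernoff
  have step1 : ((Finset.univ.filter fun π : Equiv.Perm (BitStr n) =>
        sP n < ∑ i : Fin n, fT n ((hamW (π.symm (bflip z i)) : ℝ))).card : ℝ)
      ≤ ∑ π : Equiv.Perm (BitStr n),
          Real.exp (-(lam * sP n)) * ∏ i : Fin n, g (π.symm (bflip z i)) := by
    rw [Finset.card_filter]
    push_cast
    refine Finset.sum_le_sum fun π _ => ?_
    have hexp_eq : Real.exp (-(lam * sP n)) * ∏ i : Fin n, g (π.symm (bflip z i))
        = Real.exp (lam * ((∑ i : Fin n, fT n ((hamW (π.symm (bflip z i)) : ℝ))) - sP n)) := by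
      rw [hg]
      rw [← Real.exp_sum]
      rw [← Real.exp_add]
      congr 1
      rw [← Finset.mul_sum]
      ring
    rw [hexp_eq]
    by_cases hπ : sP n < ∑ i : Fin n, fT n ((hamW (π.symm (bflip z i)) : ℝ))
    · rw [if_pos hπ]
      refine Real.one_le_exp ?_
      have : (0:ℝ) ≤ (∑ i : Fin n, fT n ((hamW (π.symm (bflip z i)) : ℝ))) - sP n := by
        linarith
      exact mul_nonneg (le_of_lt hlam) this
    · rw [if_neg hπ]
      positivity
  -- step 2: counting bound
  have step2 : ∑ π : Equiv.Perm (BitStr n), ∏ i : Fin n, g (π.symm (bflip z i))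
      ≤ 2 * (((2^n : ℕ).factorial : ℝ)) * ((∑ x : BitStr n, g x) / (2^n : ℝ)) ^ n := by
    have := avg_perm_prod_le g hgnn (bflip z) (bflip_inj z)
      (by rw [card_bitstr]; positivity)
      (by rw [card_bitstr, Fintype.card_fin]; exact hcard)
    rw [card_bitstr, Fintype.card_fin] at this
    convert this using 3
    push_cast
    ring
  -- step 3: MGF bound
  have step3 : (∑ x : BitStr n, g x)
      ≤ (2^n : ℝ) * Real.exp (lam * mu1 n) * (11/8) := by
    have hmgf := sum_exp_le_of_range (fun x : BitStr n => fT n ((hamW x : ℝ)))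
      (mu1 n) (RP n) lam hR (mu1_mean_zero hn) (fun x => fT_range hn x)
    rw [card_bitstr] at hmgf
    have hcosh : (Real.exp (lam * RP n) + Real.exp (-(lam * RP n)))/2 ≤ 11/8 := by
      rw [hlamdef, lamP_mul_RP hn]
      exact exp_numeric_cosh
    calc (∑ x : BitStr n, g x)
        ≤ ((2^n : ℕ) : ℝ) * Real.exp (lam * mu1 n)
            * ((Real.exp (lam * RP n) + Real.exp (-(lam * RP n)))/2) := hmgf
      _ ≤ ((2^n : ℕ) : ℝ) * Real.exp (lam * mu1 n) * (11/8) := by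
          refine mul_le_mul_of_nonneg_left hcosh ?_
          positivity
      _ = (2^n : ℝ) * Real.exp (lam * mu1 n) * (11/8) := by
          push_cast
          ring
  -- assemble
  have hpow : ((∑ x : BitStr n, g x) / (2^n : ℝ)) ^ n
      ≤ (Real.exp (lam * mu1 n) * (11/8)) ^ n := by
    refine pow_le_pow_left₀ (by positivity) ?_ n
    rw [div_le_iff₀ (by positivity : (0:ℝ) < (2^n : ℝ))]
    calc (∑ x : BitStr n, g x) ≤ (2^n : ℝ) * Real.exp (lam * mu1 n) * (11/8) := step3
      _ = Real.exp (lam * mu1 n) * (11/8) * (2^n:ℝ) := by ring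
  have hexp_bound : Real.exp (-(lam * sP n)) * (Real.exp (lam * mu1 n) * (11/8)) ^ n
      ≤ (11/8 : ℝ)^n * Real.exp (-(7/6) * n) := by
    have hLHS : Real.exp (-(lam * sP n)) * (Real.exp (lam * mu1 n) * (11/8)) ^ n
        = Real.exp (-(lam * (sP n - (n:ℝ) * mu1 n))) * (11/8:ℝ)^n := by
      rw [mul_pow, ← Real.exp_nat_mul, ← mul_assoc, ← Real.exp_add]
      have harg : -(lam * sP n) + (n:ℝ) * (lam * mu1 n) = -(lam * (sP n - (n:ℝ) * mu1 n)) := by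
        ring
      rw [harg]
    rw [hLHS]
    have hkey : (7/6 : ℝ) * n ≤ lam * (sP n - (n:ℝ) * mu1 n) := by
      calc (7/6 : ℝ) * n = lam * (7 * aP n / (n:ℝ)) := by
            rw [hlamdef]
            unfold lamP
            field_simp
        _ ≤ lam * (sP n - (n:ℝ) * mu1 n) := by
            exact mul_le_mul_of_nonneg_left ht (le_of_lt hlam)
    calc Real.exp (-(lam * (sP n - (n:ℝ) * mu1 n))) * (11/8:ℝ)^n
        ≤ Real.exp (-((7/6 : ℝ) * n)) * (11/8:ℝ)^n := by
          refine mul_le_mul_of_nonneg_right (Real.exp_le_exp.mpr (by linarith)) ?_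
          positivity
      _ = (11/8 : ℝ)^n * Real.exp (-(7/6) * n) := by
          rw [neg_mul]
          ring
  calc ((Finset.univ.filter fun π : Equiv.Perm (BitStr n) =>
        sP n < ∑ i : Fin n, fT n ((hamW (π.symm (bflip z i)) : ℝ))).card : ℝ)
      ≤ ∑ π : Equiv.Perm (BitStr n),
          Real.exp (-(lam * sP n)) * ∏ i : Fin n, g (π.symm (bflip z i)) := step1
    _ = Real.exp (-(lam * sP n)) * ∑ π : Equiv.Perm (BitStr n),
          ∏ i : Fin n, g (π.symm (bflip z i)) := by rw [Finset.mul_sum]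
    _ ≤ Real.exp (-(lam * sP n)) * (2 * (((2^n : ℕ).factorial : ℝ))
          * ((∑ x : BitStr n, g x) / (2^n : ℝ)) ^ n) := by
        refine mul_le_mul_of_nonneg_left step2 (le_of_lt (Real.exp_pos _))
    _ ≤ Real.exp (-(lam * sP n)) * (2 * (((2^n : ℕ).factorial : ℝ))
          * (Real.exp (lam * mu1 n) * (11/8)) ^ n) := by
        refine mul_le_mul_of_nonneg_left ?_ (le_of_lt (Real.exp_pos _))
        refine mul_le_mul_of_nonneg_left hpow ?_
        positivity
    _ = 2 * (((2^n : ℕ).factorial : ℝ))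
          * (Real.exp (-(lam * sP n)) * (Real.exp (lam * mu1 n) * (11/8)) ^ n) := by ring
    _ ≤ 2 * (((2^n : ℕ).factorial : ℝ)) * ((11/8 : ℝ)^n * Real.exp (-(7/6) * n)) := by
        refine mul_le_mul_of_nonneg_left hexp_bound ?_
        positivity

lemma bad1_card {n : ℕ} (hn : 1 ≤ n) (hcard : 2 * n^2 ≤ 2^n) (hKn : KP n ≤ n)
    (z : BitStr n) :
    ((Finset.univ.filter fun π : Equiv.Perm (BitStr n) =>
        KP n ≤ (Finset.univ.filter fun i : Fin n =>
          (hamW (π.symm (bflip z i)) : ℝ) < loP n).card).card : ℝ)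
      ≤ (n:ℝ)^(KP n) * (2 * (((2^n : ℕ).factorial : ℝ))
          * Real.exp ((KP n : ℝ) * (-(bP n^2/(n:ℝ))))) := by
  have ha := aP_pos hn
  have hnp := nR_pos hn
  set K := KP n with hK
  set g : BitStr n → ℝ := fun x => if (hamW x : ℝ) < loP n then (1:ℝ) else 0 with hg
  have hgnn : ∀ x, 0 ≤ g x := by
    intro x
    simp only [hg]
    split <;> norm_num
  -- the deep-string probability
  have hp : (∑ x : BitStr n, g x) ≤ (2^n : ℝ) * Real.exp (-(bP n^2/(n:ℝ))) := by
    have hsum : ∑ x : BitStr n, g x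
        = ((Finset.univ.filter fun x : BitStr n => (hamW x : ℝ) < loP n).card : ℝ) := by
      rw [Finset.card_filter]
      push_cast
      simp only [hg]
    rw [hsum]
    have hlo_eq : loP n = (n:ℝ)/2 - bP n := rfl
    rw [hlo_eq]
    exact tail_card_le (bP_nonneg hn) (le_trans (by unfold bP; nlinarith) (aP_le_n hn)) hn
  -- union over K-subsets
  have hsub : (Finset.univ.filter fun π : Equiv.Perm (BitStr n) =>
        K ≤ (Finset.univ.filter fun i : Fin n =>
          (hamW (π.symm (bflip z i)) : ℝ) < loP n).card)
      ⊆ (Finset.univ.powersetCard K).biUnion (fun T =>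
          Finset.univ.filter fun π : Equiv.Perm (BitStr n) =>
            ∀ i ∈ T, (hamW (π.symm (bflip z i)) : ℝ) < loP n) := by
    intro π hπ
    rw [Finset.mem_filter] at hπ
    obtain ⟨T, hT, hTcard⟩ := Finset.exists_subset_card_eq hπ.2
    rw [Finset.mem_biUnion]
    refine ⟨T, ?_, ?_⟩
    · rw [Finset.mem_powersetCard]
      exact ⟨Finset.subset_univ _, hTcard⟩
    · rw [Finset.mem_filter]
      refine ⟨Finset.mem_univ _, fun i hi => ?_⟩
      have := hT hi
      rw [Finset.mem_filter] at this
      exact this.2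
  -- per-subset bound
  have hperT : ∀ T ∈ Finset.univ.powersetCard K,
      ((Finset.univ.filter fun π : Equiv.Perm (BitStr n) =>
          ∀ i ∈ T, (hamW (π.symm (bflip z i)) : ℝ) < loP n).card : ℝ)
        ≤ 2 * (((2^n : ℕ).factorial : ℝ)) * Real.exp ((K:ℝ) * (-(bP n^2/(n:ℝ)))) := by
    intro T hT
    rw [Finset.mem_powersetCard] at hT
    have hTcard : T.card = K := hT.2
    have hcount : ((Finset.univ.filter fun π : Equiv.Perm (BitStr n) =>
          ∀ i ∈ T, (hamW (π.symm (bflip z i)) : ℝ) < loP n).card : ℝ)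
        = ∑ π : Equiv.Perm (BitStr n), ∏ i : {i : Fin n // i ∈ T}, g (π.symm (bflip z i.val)) := by
      rw [Finset.card_filter]
      push_cast
      refine Finset.sum_congr rfl fun π _ => ?_
      have hib : ∀ i : {i : Fin n // i ∈ T},
          g (π.symm (bflip z i.val)) = if (hamW (π.symm (bflip z i.val)) : ℝ) < loP n then (1:ℝ) else 0 := fun i => rfl
      rw [Finset.prod_congr rfl fun i _ => hib i]
      rw [Finset.prod_boole]
      congr 1
      simp only [eq_iff_iff]
      constructor
      · intro h i _
        exact h i.val i.property
      · intro h i hi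
        exact h ⟨i, hi⟩ (Finset.mem_univ _)
    rw [hcount]
    have hyinj : Function.Injective (fun i : {i : Fin n // i ∈ T} => bflip z i.val) := by
      intro i j hij
      exact Subtype.ext (bflip_inj z hij)
    have hKcard : Fintype.card {i : Fin n // i ∈ T} = K := by
      rw [Fintype.card_coe, hTcard]
    have havg := avg_perm_prod_le g hgnn (fun i : {i : Fin n // i ∈ T} => bflip z i.val) hyinj
      (by rw [card_bitstr]; positivity)
      (by
        rw [card_bitstr, hKcard]
        calc 2 * K^2 ≤ 2 * n^2 := by
              have : K ≤ n := hKn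
              nlinarith
          _ ≤ 2^n := hcard)
    rw [card_bitstr, hKcard] at havg
    calc ∑ π : Equiv.Perm (BitStr n), ∏ i : {i : Fin n // i ∈ T}, g (π.symm (bflip z i.val))
        ≤ 2 * (((2^n : ℕ).factorial : ℝ)) * ((∑ x : BitStr n, g x) / ((2^n : ℕ) : ℝ)) ^ K := havg
      _ ≤ 2 * (((2^n : ℕ).factorial : ℝ)) * Real.exp ((K:ℝ) * (-(bP n^2/(n:ℝ)))) := by
          refine mul_le_mul_of_nonneg_left ?_ (by positivity)
          rw [Real.exp_nat_mul]
          refine pow_le_pow_left₀ ?_ ?_ K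
          · positivity
          · rw [div_le_iff₀ (by positivity : (0:ℝ) < ((2^n:ℕ) : ℝ))]
            calc (∑ x : BitStr n, g x) ≤ (2^n : ℝ) * Real.exp (-(bP n^2/(n:ℝ))) := hp
              _ = Real.exp (-(bP n^2/(n:ℝ))) * ((2^n : ℕ) : ℝ) := by
                  push_cast
                  ring
  -- union bound
  calc ((Finset.univ.filter fun π : Equiv.Perm (BitStr n) =>
        K ≤ (Finset.univ.filter fun i : Fin n =>
          (hamW (π.symm (bflip z i)) : ℝ) < loP n).card).card : ℝ)
      ≤ (((Finset.univ.powersetCard K).biUnion (fun T =>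
          Finset.univ.filter fun π : Equiv.Perm (BitStr n) =>
            ∀ i ∈ T, (hamW (π.symm (bflip z i)) : ℝ) < loP n)).card : ℝ) := by
        exact_mod_cast Finset.card_le_card hsub
    _ ≤ ∑ T ∈ Finset.univ.powersetCard K,
          ((Finset.univ.filter fun π : Equiv.Perm (BitStr n) =>
            ∀ i ∈ T, (hamW (π.symm (bflip z i)) : ℝ) < loP n).card : ℝ) := by
        exact_mod_cast Finset.card_biUnion_le
    _ ≤ ∑ _T ∈ Finset.univ.powersetCard K,
          (2 * (((2^n : ℕ).factorial : ℝ)) * Real.exp ((K:ℝ) * (-(bP n^2/(n:ℝ))))) :=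
        Finset.sum_le_sum hperT
    _ = ((Finset.univ.powersetCard K).card : ℝ)
          * (2 * (((2^n : ℕ).factorial : ℝ)) * Real.exp ((K:ℝ) * (-(bP n^2/(n:ℝ))))) := by
        rw [Finset.sum_const, nsmul_eq_mul]
    _ ≤ (n:ℝ)^K * (2 * (((2^n : ℕ).factorial : ℝ)) * Real.exp ((K:ℝ) * (-(bP n^2/(n:ℝ))))) := by
        refine mul_le_mul_of_nonneg_right ?_ (by positivity)
        rw [Finset.card_powersetCard, Finset.card_univ, Fintype.card_fin]
        exact_mod_cast Nat.choose_le_pow n K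


/-! ### eventual largeness facts -/

lemma two_mul_sq_le_two_pow : ∀ᶠ n : ℕ in Filter.atTop, 2 * n^2 ≤ 2^n := by
  rw [Filter.eventually_atTop]
  refine ⟨8, fun n hn => ?_⟩
  obtain ⟨m, rfl⟩ := Nat.exists_eq_add_of_le hn
  clear hn
  induction m with
  | zero => norm_num
  | succ k ih =>
    have key : (8 + (k+1))^2 ≤ 2 * (8 + k)^2 := by nlinarith [Nat.zero_le k]
    calc 2 * (8 + (k+1))^2 ≤ 2 * (2 * (8 + k)^2) := by
          exact Nat.mul_le_mul_left 2 key
      _ ≤ 2 * 2^(8+k) := by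
          exact Nat.mul_le_mul_left 2 ih
      _ = 2^(8+(k+1)) := by
          rw [show 8 + (k+1) = (8+k) + 1 from rfl, pow_succ]
          ring

lemma ev_rpow_ge (c : ℝ) {e : ℝ} (he : 0 < e) :
    ∀ᶠ n : ℕ in Filter.atTop, c ≤ (n:ℝ)^e := by
  have h1 : Filter.Tendsto (fun n : ℕ => ((n:ℝ))^e) Filter.atTop Filter.atTop :=
    (tendsto_rpow_atTop he).comp tendsto_natCast_atTop_atTop
  exact h1.eventually_ge_atTop c

section rpowids
variable {n : ℕ} (hn : 1 ≤ n)
include hn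

lemma id_quarter_mul : (n:ℝ)^((1:ℝ)/4) * aP n = (n:ℝ) := by
  have h0 : (0:ℝ) < (n:ℝ) := nR_pos hn
  unfold aP
  rw [← Real.rpow_add h0]
  norm_num

lemma id_half_le : (n:ℝ)^((1:ℝ)/2) ≤ aP n := by
  have h1 : (1:ℝ) ≤ (n:ℝ) := by exact_mod_cast hn
  unfold aP
  apply Real.rpow_le_rpow_of_exponent_le h1
  norm_num

lemma id_half_sq : (n:ℝ)^((1:ℝ)/2) * (n:ℝ) = (aP n)^2 := by
  have h0 : (0:ℝ) < (n:ℝ) := nR_pos hn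
  unfold aP
  rw [sq, ← Real.rpow_add h0]
  calc (n:ℝ)^((1:ℝ)/2) * (n:ℝ) = (n:ℝ)^((1:ℝ)/2) * (n:ℝ)^(1:ℝ) := by rw [Real.rpow_one]
    _ = (n:ℝ)^((1:ℝ)/2 + 1) := by rw [← Real.rpow_add h0]
    _ = (n:ℝ)^((3:ℝ)/4 + 3/4) := by norm_num
  
lemma id_quarter_pow4 : ((n:ℝ)^((1:ℝ)/4))^4 = (n:ℝ) := by
  have h0 : (0:ℝ) ≤ (n:ℝ) := le_of_lt (nR_pos hn)
  rw [← Real.rpow_natCast ((n:ℝ)^((1:ℝ)/4)) 4, ← Real.rpow_mul h0]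
  norm_num

lemma id_neg_quarter : (n:ℝ) * (n:ℝ)^(-(1/4) : ℝ) = aP n := by
  have h0 : (0:ℝ) < (n:ℝ) := nR_pos hn
  unfold aP
  calc (n:ℝ) * (n:ℝ)^(-(1/4) : ℝ) = (n:ℝ)^(1:ℝ) * (n:ℝ)^(-(1/4) : ℝ) := by rw [Real.rpow_one]
    _ = (n:ℝ)^((1:ℝ) + -(1/4)) := by rw [← Real.rpow_add h0]
    _ = (n:ℝ)^((3:ℝ)/4) := by norm_num

lemma id_quarter_cube : ((n:ℝ)^((1:ℝ)/4))^3 = aP n := by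
  have h0 : (0:ℝ) ≤ (n:ℝ) := le_of_lt (nR_pos hn)
  unfold aP
  rw [← Real.rpow_natCast ((n:ℝ)^((1:ℝ)/4)) 3, ← Real.rpow_mul h0]
  norm_num

end rpowids

lemma ev_KP_le : ∀ᶠ n : ℕ in Filter.atTop, KP n ≤ n := by
  filter_upwards [ev_rpow_ge 4 (by norm_num : (0:ℝ) < 1/2), Filter.eventually_ge_atTop 1]
    with n h4 hn
  have hnp := nR_pos hn
  have hub := KP_ub (n := n)
  have hsq := id_half_sq hn
  have h0 : (n:ℝ) ≠ 0 := ne_of_gt hnp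
  have hSN : 3 * (aP n)^2 / (n:ℝ) = 3 * (n:ℝ)^((1:ℝ)/2) := by
    rw [← hsq]
    field_simp
  have hsqsq : (n:ℝ)^((1:ℝ)/2) * (n:ℝ)^((1:ℝ)/2) = (n:ℝ) := by
    rw [← Real.rpow_add hnp]
    norm_num
  have h1 : 3 * (aP n)^2 / (n:ℝ) + 1 ≤ (n:ℝ) := by
    rw [hSN]
    nlinarith
  have : (KP n : ℝ) ≤ (n:ℝ) := le_trans hub h1
  exact_mod_cast this

lemma ev_ht : ∀ᶠ n : ℕ in Filter.atTop, 7 * aP n / (n:ℝ) ≤ sP n - (n:ℝ) * mu1 n := by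
  filter_upwards [ev_rpow_ge 25 (by norm_num : (0:ℝ) < 1/4),
    ev_rpow_ge 30 (by norm_num : (0:ℝ) < 1/2), Filter.eventually_ge_atTop 1]
    with n h25 h30 hn
  set A := aP n with hA
  set N := (n:ℝ) with hN
  have hNp : 0 < N := nR_pos hn
  have hAp : 0 < A := aP_pos hn
  have h25A : 25 * A ≤ N := by
    have hq := id_quarter_mul hn
    have hstep : 25 * A ≤ (n:ℝ)^((1:ℝ)/4) * A := mul_le_mul_of_nonneg_right h25 (le_of_lt hAp)
    calc 25 * A ≤ (n:ℝ)^((1:ℝ)/4) * A := hstep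
      _ = N := hq
  have hA30 : 30 ≤ A := le_trans h30 (id_half_le hn)
  have hA2 : 30 * N ≤ A^2 := by
    have hq := id_half_sq hn
    have hstep : 30 * N ≤ (n:ℝ)^((1:ℝ)/2) * N := mul_le_mul_of_nonneg_right h30 (le_of_lt hNp)
    calc 30 * N ≤ (n:ℝ)^((1:ℝ)/2) * N := hstep
      _ = A^2 := hq
  have hdelta : dP n = 5/2 * A := rfl
  have hM : MP n = (N + 5*A)/2 := by
    unfold MP
    rw [hdelta]
    ring
  have hMp : 0 < MP n := by rw [hM]; positivity
  have hub : (KP n : ℝ) ≤ 3 * A^2/N + 1 := KP_ub (n := n)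
  -- n·mu1 ≤ N/M + 2/N
  have hmu : N * mu1 n ≤ N/(MP n) + 2/N := by
    have h1 := mu1_ub hn
    have h2 : N * mu1 n ≤ N * (1/MP n + 1/(2*(MP n)^2)) :=
      mul_le_mul_of_nonneg_left h1 (le_of_lt hNp)
    have h3 : N * (1/(2*(MP n)^2)) ≤ 2/N := by
      rw [mul_one_div, div_le_div_iff₀ (by positivity) hNp, hM]
      nlinarith [mul_pos hAp hNp, sq_nonneg A]
    calc N * mu1 n ≤ N * (1/MP n + 1/(2*(MP n)^2)) := h2
      _ = N/(MP n) + N * (1/(2*(MP n)^2)) := by ring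
      _ ≤ N/(MP n) + 2/N := by linarith
  -- 2 - N/M = 10A/(N + 5A)
  have hNM : 2 - N/(MP n) = 10*A/(N + 5*A) := by
    rw [hM]
    field_simp
    ring
  have hfrac : (25/3) * (A/N) ≤ 10*A/(N + 5*A) := by
    have hrw : (25/3 : ℝ) * (A/N) = 25*A/(3*N) := by ring
    rw [hrw, div_le_div_iff₀ (by positivity) (by positivity)]
    nlinarith [mul_pos hAp hNp, sq_nonneg A]
  -- K/δ ≤ (6/5)(A/N) + (2/5)/A
  have hKd : (KP n : ℝ)/(dP n) ≤ (6/5)*(A/N) + (2/5)/A := by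
    rw [hdelta, div_le_iff₀ (by positivity)]
    have hident : ((6/5)*(A/N) + (2/5)/A) * (5/2 * A) = 3*A^2/N + 1 := by
      field_simp
      ring
    rw [hident]
    exact hub
  have hx : (2/5 : ℝ)/A ≤ (1/15)*(A/N) := by
    have hrw : (1/15 : ℝ)*(A/N) = A/(15*N) := by ring
    rw [hrw, div_le_div_iff₀ hAp (by positivity)]
    nlinarith
  have hy : (2:ℝ)/N ≤ (1/15)*(A/N) := by
    have hrw : (1/15 : ℝ)*(A/N) = A/(15*N) := by ring
    rw [hrw, div_le_div_iff₀ hNp (by positivity)]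
    nlinarith
  unfold sP
  have h7 : 7 * A/N = 7 * (A/N) := by ring
  rw [h7]
  linarith

lemma exp_numeric_3732 : (20/9 : ℝ) ≤ Real.exp (37/32) := by
  have hlow := Real.sum_le_exp_of_nonneg (by norm_num : (0:ℝ) ≤ 37/32) 3
  have hs : ∑ i ∈ Finset.range 3, (37/32:ℝ)^i / (i.factorial : ℝ) = 5785/2048 := by
    simp [Finset.sum_range_succ, Nat.factorial]
    norm_num
  rw [hs] at hlow
  nlinarith

lemma ev_term2 : ∀ᶠ n : ℕ in Filter.atTop,
    (2:ℝ)^n * ((n:ℝ)^(KP n) * Real.exp ((KP n:ℝ) * (-(bP n^2/(n:ℝ))))) ≤ (9/10:ℝ)^n := by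
  filter_upwards [ev_rpow_ge 1024 (by norm_num : (0:ℝ) < 1/4), Filter.eventually_ge_atTop 1]
    with n hu hn
  set u := (n:ℝ)^((1:ℝ)/4) with hu_def
  set N := (n:ℝ) with hN
  have hNp : 0 < N := nR_pos hn
  have hup : 0 < u := Real.rpow_pos_of_pos hNp _
  have hu4 : u^4 = N := id_quarter_pow4 hn
  have hu3 : u^3 = aP n := id_quarter_cube hn
  have hKub := KP_ub (n := n)
  have hKlb := KP_lb (n := n)
  have hA2N : (aP n)^2/N = u^2 := by
    rw [← hu3]
    rw [div_eq_iff (ne_of_gt hNp), ← hu4]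
    ring
  -- N ≤ exp (4u)
  have hNle : N ≤ Real.exp (4*u) := by
    have h1 := Real.sum_le_exp_of_nonneg (by positivity : (0:ℝ) ≤ 4*u) 5
    have h2 : (4*u)^4/((4:ℕ).factorial : ℝ) ≤ Real.exp (4*u) := by
      refine le_trans ?_ h1
      refine Finset.single_le_sum (f := fun i => (4*u)^i / (i.factorial : ℝ)) ?_ ?_
      · intro i _
        positivity
      · simp
    have h2' : (4*u)^4/24 ≤ Real.exp (4*u) := by
      have hfac : ((4:ℕ).factorial : ℝ) = 24 := by norm_num [Nat.factorial]
      rwa [hfac] at h2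
    calc N = u^4 := hu4.symm
      _ ≤ (4*u)^4/24 := by nlinarith [pow_pos hup 4]
      _ ≤ Real.exp (4*u) := h2'
  -- N^K ≤ exp (4u·K)
  have hNK : (N:ℝ)^(KP n) ≤ Real.exp ((KP n : ℝ) * (4*u)) := by
    rw [Real.exp_nat_mul]
    exact pow_le_pow_left₀ (le_of_lt hNp) hNle _
  -- K·(b²/N) ≥ (75/64)N and 4uK ≤ N/64
  have hb2 : bP n^2 = (25/64) * (aP n)^2 := by
    unfold bP
    ring
  have hKb : (75/64) * N ≤ (KP n : ℝ) * (bP n^2/N) := by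
    have h1 : bP n^2/N = (25/64) * u^2 := by
      rw [hb2]
      rw [mul_div_assoc, hA2N]
    rw [h1]
    have h2 : 3 * u^2 ≤ (KP n : ℝ) := by
      calc (3:ℝ) * u^2 = 3 * ((aP n)^2/N) := by rw [hA2N]
        _ = 3 * (aP n)^2/N := by ring
        _ ≤ (KP n : ℝ) := hKlb
    have hu2 : 0 < u^2 := by positivity
    calc (75/64) * N = (3 * u^2) * ((25/64) * u^2) := by
          rw [← hu4]; ring
      _ ≤ (KP n : ℝ) * ((25/64) * u^2) := by
          refine mul_le_mul_of_nonneg_right h2 ?_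
          positivity
  have h4uK : (KP n : ℝ) * (4*u) ≤ (1/64) * N := by
    have hK16 : (KP n : ℝ) ≤ 4 * u^2 := by
      calc (KP n : ℝ) ≤ 3 * (aP n)^2/N + 1 := hKub
        _ = 3 * u^2 + 1 := by rw [mul_div_assoc, hA2N]
        _ ≤ 4 * u^2 := by nlinarith
    calc (KP n : ℝ) * (4*u) ≤ (4 * u^2) * (4*u) := by
          refine mul_le_mul_of_nonneg_right hK16 (by positivity)
      _ = 16 * u^3 := by ring
      _ ≤ (1/64) * N := by
          rw [← hu4]
          nlinarith
  -- combine
  have hmain : (N:ℝ)^(KP n) * Real.exp ((KP n:ℝ) * (-(bP n^2/N)))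
      ≤ Real.exp (-(37/32) * N) := by
    calc (N:ℝ)^(KP n) * Real.exp ((KP n:ℝ) * (-(bP n^2/N)))
        ≤ Real.exp ((KP n : ℝ) * (4*u)) * Real.exp ((KP n:ℝ) * (-(bP n^2/N))) := by
          refine mul_le_mul_of_nonneg_right hNK (le_of_lt (Real.exp_pos _))
      _ = Real.exp ((KP n : ℝ) * (4*u) - (KP n:ℝ) * (bP n^2/N)) := by
          rw [← Real.exp_add]
          congr 1
          ring
      _ ≤ Real.exp (-(37/32) * N) := by
          refine Real.exp_le_exp.mpr ?_
          have : (KP n:ℝ) * (bP n^2/N) ≥ (75/64) * N := hKb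
          nlinarith
  calc (2:ℝ)^n * ((N:ℝ)^(KP n) * Real.exp ((KP n:ℝ) * (-(bP n^2/N))))
      ≤ (2:ℝ)^n * Real.exp (-(37/32) * N) := by
        refine mul_le_mul_of_nonneg_left hmain (by positivity)
    _ = (2 * Real.exp (-(37/32)))^n := by
        rw [mul_pow, ← Real.exp_nat_mul]
        congr 2
        rw [hN]
        ring
    _ ≤ (9/10:ℝ)^n := by
        refine pow_le_pow_left₀ (by positivity) ?_ n
        have h1 := exp_numeric_3732
        have h2 : Real.exp (-(37/32)) = (Real.exp (37/32))⁻¹ := Real.exp_neg _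
        have h3 : 0 < Real.exp (37/32) := Real.exp_pos _
        rw [h2]
        rw [mul_inv_le_iff₀ h3]
        nlinarith


/-! ### master estimate -/

noncomputable def Bad1 (n : ℕ) (z : BitStr n) : Finset (Equiv.Perm (BitStr n)) :=
  Finset.univ.filter fun π => KP n ≤ (Finset.univ.filter fun i : Fin n =>
    (hamW (π.symm (bflip z i)) : ℝ) < loP n).card

noncomputable def Bad2 (n : ℕ) (z : BitStr n) : Finset (Equiv.Perm (BitStr n)) :=
  Finset.univ.filter fun π =>
    sP n < ∑ i : Fin n, fT n ((hamW (π.symm (bflip z i)) : ℝ))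

lemma master (n : ℕ) (hn : 1 ≤ n)
    (hcard : 2 * n^2 ≤ 2^n) (hKn : KP n ≤ n)
    (ht : 7 * aP n / (n:ℝ) ≤ sP n - (n:ℝ) * mu1 n)
    (hterm2 : (2:ℝ)^n * ((n:ℝ)^(KP n) * Real.exp ((KP n:ℝ) * (-(bP n^2/(n:ℝ))))) ≤ (9/10:ℝ)^n) :
    1 - 4*(9/10:ℝ)^n
      ≤ prPerm n (fun π => Epi n π (1 / 2)
          ≥ ((n : ℝ) / 4) * (1 - 5 * (n : ℝ) ^ (-(1 / 4) : ℝ))) := by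
  classical
  have hthr : ((n : ℝ) / 4) * (1 - 5 * (n : ℝ) ^ (-(1 / 4) : ℝ)) = (n:ℝ)/4 - dP n/2 := by
    have hid := id_neg_quarter hn
    have hd : dP n = 5/2 * aP n := rfl
    rw [hd, ← hid]
    ring
  -- deterministic implication
  have himp : ∀ π : Equiv.Perm (BitStr n),
      (∀ z : BitStr n, ¬ (KP n ≤ (Finset.univ.filter fun i : Fin n =>
          (hamW (π.symm (bflip z i)) : ℝ) < loP n).card)
        ∧ ¬ (sP n < ∑ i : Fin n, fT n ((hamW (π.symm (bflip z i)) : ℝ)))) →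
      Epi n π (1 / 2) ≥ ((n : ℝ) / 4) * (1 - 5 * (n : ℝ) ^ (-(1 / 4) : ℝ)) := by
    intro π hgood
    rw [ge_iff_le, hthr]
    have hS : ∀ z : BitStr n,
        ∑ i : Fin n, (1:ℝ)/((hamW (π.symm (bflip z i)) : ℝ) + dP n) ≤ 2 := by
      intro z
      refine good_S_le hn π z ?_ ?_
      · have h1 := (hgood z).1
        have h2 : (Finset.univ.filter fun i : Fin n =>
            (hamW (π.symm (bflip z i)) : ℝ) < loP n).card ≤ KP n := by omega
        exact_mod_cast h2
      · exact le_of_not_gt (hgood z).2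
    exact epi_ge π (fun v => quad_bound π (dP_pos hn) hS v)
  -- counting
  have hsub : (Finset.univ.filter fun π : Equiv.Perm (BitStr n) =>
        ¬ (Epi n π (1 / 2) ≥ ((n : ℝ) / 4) * (1 - 5 * (n : ℝ) ^ (-(1 / 4) : ℝ))))
      ⊆ Finset.univ.biUnion (fun z : BitStr n => Bad1 n z ∪ Bad2 n z) := by
    intro π hπ
    rw [Finset.mem_filter] at hπ
    by_contra hno
    apply hπ.2
    apply himp
    intro z
    rw [Finset.mem_biUnion] at hno
    push_neg at hno
    have hz := hno z (Finset.mem_univ _)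
    rw [Finset.mem_union] at hz
    push_neg at hz
    have h1 := hz.1
    have h2 := hz.2
    unfold Bad1 at h1
    unfold Bad2 at h2
    rw [Finset.mem_filter] at h1 h2
    push_neg at h1 h2
    exact ⟨not_le.mpr (h1 (Finset.mem_univ _)), not_lt.mpr (h2 (Finset.mem_univ _))⟩
  set B1 : ℝ := (n:ℝ)^(KP n) * (2 * (((2^n : ℕ).factorial : ℝ))
      * Real.exp ((KP n : ℝ) * (-(bP n^2/(n:ℝ))))) with hB1def
  set B2 : ℝ := 2 * (((2^n : ℕ).factorial : ℝ)) * ((11/8 : ℝ)^n * Real.exp (-(7/6) * n))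
    with hB2def
  have hbound : ∀ z : BitStr n, (((Bad1 n z ∪ Bad2 n z)).card : ℝ) ≤ B1 + B2 := by
    intro z
    have hb1 := bad1_card hn hcard hKn z
    have hb2 := bad2_card hn hcard ht z
    have hu : ((Bad1 n z ∪ Bad2 n z).card : ℝ)
        ≤ ((Bad1 n z).card : ℝ) + ((Bad2 n z).card : ℝ) := by
      exact_mod_cast Finset.card_union_le _ _
    unfold Bad1 at hu
    unfold Bad2 at hu
    rw [hB1def, hB2def]
    unfold Bad1 Bad2
    linarith
  have hcount : ((Finset.univ.filter fun π : Equiv.Perm (BitStr n) =>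
        ¬ (Epi n π (1 / 2) ≥ ((n : ℝ) / 4) * (1 - 5 * (n : ℝ) ^ (-(1 / 4) : ℝ)))).card : ℝ)
      ≤ (2:ℝ)^n * (B1 + B2) := by
    calc ((Finset.univ.filter fun π : Equiv.Perm (BitStr n) =>
          ¬ (Epi n π (1 / 2) ≥ ((n : ℝ) / 4) * (1 - 5 * (n : ℝ) ^ (-(1 / 4) : ℝ)))).card : ℝ)
        ≤ ((Finset.univ.biUnion (fun z : BitStr n => Bad1 n z ∪ Bad2 n z)).card : ℝ) := by
          exact_mod_cast Finset.card_le_card hsub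
      _ ≤ ∑ z : BitStr n, (((Bad1 n z ∪ Bad2 n z)).card : ℝ) := by
          exact_mod_cast Finset.card_biUnion_le
      _ ≤ ∑ _z : BitStr n, (B1 + B2) := Finset.sum_le_sum fun z _ => hbound z
      _ = (2:ℝ)^n * (B1 + B2) := by
          rw [Finset.sum_const, Finset.card_univ, card_bitstr, nsmul_eq_mul]
          push_cast
          ring
  -- the probability bound
  have hterm1 : (2:ℝ)^n * ((11/8 : ℝ)^n * Real.exp (-(7/6) * n)) ≤ (9/10:ℝ)^n := by
    have hE : Real.exp (-(7/6) * n) = (Real.exp (-(7/6)))^n := by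
      rw [← Real.exp_nat_mul]
      congr 1
      ring
    rw [hE, ← mul_pow, ← mul_pow]
    refine pow_le_pow_left₀ (by positivity) ?_ n
    have h1 := exp_numeric_76
    have h2 : Real.exp (-(7/6 : ℝ)) = (Real.exp (7/6))⁻¹ := Real.exp_neg _
    have h3 : (0:ℝ) < Real.exp (7/6) := Real.exp_pos _
    rw [h2]
    have h4 : (0:ℝ) < (Real.exp (7/6))⁻¹ := inv_pos.mpr h3
    have h5 : Real.exp (7/6) * (Real.exp (7/6))⁻¹ = 1 := mul_inv_cancel₀ (ne_of_gt h3)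
    nlinarith [mul_nonneg (sub_nonneg.mpr h1) (le_of_lt h4)]
  have hNfac_pos : (0:ℝ) < (((2^n : ℕ).factorial : ℕ) : ℝ) := by
    exact_mod_cast Nat.factorial_pos _
  have hfinal : (2:ℝ)^n * (B1 + B2) ≤ 4*(9/10:ℝ)^n * (((2^n : ℕ).factorial : ℕ) : ℝ) := by
    have hf1 : (2:ℝ)^n * B1 ≤ 2 * (((2^n : ℕ).factorial : ℝ)) * (9/10:ℝ)^n := by
      rw [hB1def]
      calc (2:ℝ)^n * ((n:ℝ)^(KP n) * (2 * (((2^n : ℕ).factorial : ℝ))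
            * Real.exp ((KP n : ℝ) * (-(bP n^2/(n:ℝ))))))
          = 2 * (((2^n : ℕ).factorial : ℝ))
              * ((2:ℝ)^n * ((n:ℝ)^(KP n) * Real.exp ((KP n:ℝ) * (-(bP n^2/(n:ℝ)))))) := by
            ring
        _ ≤ 2 * (((2^n : ℕ).factorial : ℝ)) * (9/10:ℝ)^n := by
            refine mul_le_mul_of_nonneg_left hterm2 ?_
            positivity
    have hf2 : (2:ℝ)^n * B2 ≤ 2 * (((2^n : ℕ).factorial : ℝ)) * (9/10:ℝ)^n := by
      rw [hB2def]
      calc (2:ℝ)^n * (2 * (((2^n : ℕ).factorial : ℝ)) * ((11/8 : ℝ)^n * Real.exp (-(7/6) * n)))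
          = 2 * (((2^n : ℕ).factorial : ℝ))
              * ((2:ℝ)^n * ((11/8 : ℝ)^n * Real.exp (-(7/6) * n))) := by ring
        _ ≤ 2 * (((2^n : ℕ).factorial : ℝ)) * (9/10:ℝ)^n := by
            refine mul_le_mul_of_nonneg_left hterm1 ?_
            positivity
    calc (2:ℝ)^n * (B1 + B2) = (2:ℝ)^n * B1 + (2:ℝ)^n * B2 := by ring
      _ ≤ 2 * (((2^n : ℕ).factorial : ℝ)) * (9/10:ℝ)^n
          + 2 * (((2^n : ℕ).factorial : ℝ)) * (9/10:ℝ)^n := add_le_add hf1 hf2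
      _ = 4*(9/10:ℝ)^n * (((2^n : ℕ).factorial : ℕ) : ℝ) := by push_cast; ring
  have hsplit : (Finset.univ.filter fun π : Equiv.Perm (BitStr n) =>
        Epi n π (1 / 2) ≥ ((n : ℝ) / 4) * (1 - 5 * (n : ℝ) ^ (-(1 / 4) : ℝ))).card
      + (Finset.univ.filter fun π : Equiv.Perm (BitStr n) =>
        ¬ (Epi n π (1 / 2) ≥ ((n : ℝ) / 4) * (1 - 5 * (n : ℝ) ^ (-(1 / 4) : ℝ)))).card
      = (2^n : ℕ).factorial := by
    rw [Finset.card_filter_add_card_filter_not, Finset.card_univ,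
      Fintype.card_perm, card_bitstr]
  unfold prPerm
  rw [Fintype.card_perm, card_bitstr]
  rw [le_div_iff₀ hNfac_pos]
  have hcast : ((Finset.univ.filter fun π : Equiv.Perm (BitStr n) =>
        Epi n π (1 / 2) ≥ ((n : ℝ) / 4) * (1 - 5 * (n : ℝ) ^ (-(1 / 4) : ℝ))).card : ℝ)
      = (((2^n : ℕ).factorial : ℕ) : ℝ)
        - ((Finset.univ.filter fun π : Equiv.Perm (BitStr n) =>
          ¬ (Epi n π (1 / 2) ≥ ((n : ℝ) / 4) * (1 - 5 * (n : ℝ) ^ (-(1 / 4) : ℝ)))).card : ℝ) := by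
    have := hsplit
    have hc : ((Finset.univ.filter fun π : Equiv.Perm (BitStr n) =>
          Epi n π (1 / 2) ≥ ((n : ℝ) / 4) * (1 - 5 * (n : ℝ) ^ (-(1 / 4) : ℝ))).card : ℝ)
        + ((Finset.univ.filter fun π : Equiv.Perm (BitStr n) =>
          ¬ (Epi n π (1 / 2) ≥ ((n : ℝ) / 4) * (1 - 5 * (n : ℝ) ^ (-(1 / 4) : ℝ)))).card : ℝ)
        = (((2^n : ℕ).factorial : ℕ) : ℝ) := by
      exact_mod_cast this
    linarith
  rw [hcast]
  nlinarith [hcount, hfinal, hNfac_pos]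

end Stmt14


/-- `Pr[ E_π(1/2) ≥ (n/4)·(1 - 5·n^{-1/4}) ] → 1` as `n → ∞`. -/
theorem stmt14 :
    Filter.Tendsto
      (fun n : ℕ => prPerm n fun π =>
        Epi n π (1 / 2) ≥ ((n : ℝ) / 4) * (1 - 5 * (n : ℝ) ^ (-(1 / 4) : ℝ)))
      Filter.atTop (nhds 1) := by
  classical
  have h_up : ∀ n : ℕ, prPerm n (fun π =>
      Epi n π (1 / 2) ≥ ((n : ℝ) / 4) * (1 - 5 * (n : ℝ) ^ (-(1 / 4) : ℝ))) ≤ 1 := by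
    intro n
    unfold prPerm
    have hpos : (0:ℝ) < (Fintype.card (Equiv.Perm (BitStr n)) : ℝ) := by
      exact_mod_cast Fintype.card_pos
    rw [div_le_one hpos]
    have h1 : (Finset.univ.filter fun π : Equiv.Perm (BitStr n) =>
        Epi n π (1 / 2) ≥ ((n : ℝ) / 4) * (1 - 5 * (n : ℝ) ^ (-(1 / 4) : ℝ))).card
        ≤ Finset.univ.card := Finset.card_filter_le _ _
    rw [Finset.card_univ] at h1
    exact_mod_cast h1
  have h_low : ∀ᶠ n : ℕ in Filter.atTop,
      1 - 4*(9/10:ℝ)^n ≤ prPerm n (fun π =>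
        Epi n π (1 / 2) ≥ ((n : ℝ) / 4) * (1 - 5 * (n : ℝ) ^ (-(1 / 4) : ℝ))) := by
    filter_upwards [Filter.eventually_ge_atTop 1, Stmt14.two_mul_sq_le_two_pow,
      Stmt14.ev_KP_le, Stmt14.ev_ht, Stmt14.ev_term2] with n h1 h2 h3 h4 h5
    exact Stmt14.master n h1 h2 h3 h4 h5
  have h_aux : Filter.Tendsto (fun n : ℕ => 1 - 4*(9/10:ℝ)^n) Filter.atTop (nhds 1) := by
    have h0 : Filter.Tendsto (fun n : ℕ => (9/10:ℝ)^n) Filter.atTop (nhds 0) :=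
      tendsto_pow_atTop_nhds_zero_of_lt_one (by norm_num) (by norm_num)
    have h1 := Filter.Tendsto.const_mul (4:ℝ) h0
    have h2 := Filter.Tendsto.sub (tendsto_const_nhds (x := (1:ℝ)) (f := Filter.atTop)) h1
    simpa using h2
  exact tendsto_of_tendsto_of_tendsto_of_le_of_le' h_aux tendsto_const_nhds h_low
    (Filter.Eventually.of_forall h_up)
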